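/- Let N be a semifinite von Neumann algebra with trace τ and G, P, Q projections in N. If T ∈ PNQ is (P·Q)-Fredholm and S ∈ GNP is (G·P)-Fredholm, then ST ∈ GNQ is (G·Q)-Fredholm and Ind(ST) = Ind(S) + Ind(T). -/

import Mathlib

open MeasureTheory ContinuousLinearMap
open scoped ENNReal NNReal

noncomputable section

variable {H : Type*} [NormedAddCommGroup H] [InnerProductSpace ℂ H] [CompleteSpace H]

/-- The orthogonal projection onto the closure of a submodule, as an operator on `H`. -/
noncomputable def projOnto (K : Submodule ℂ H) : H →L[ℂ] H :=
  haveI : CompleteSpace K.topologicalClosure :=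
    K.isClosed_topologicalClosure.completeSpace_coe
  K.topologicalClosure.subtypeL ∘L K.topologicalClosure.orthogonalProjectionOnto

/-- A (self-adjoint, idempotent) projection operator. -/
def IsProjOp (P : H →L[ℂ] H) : Prop := IsSelfAdjoint P ∧ P ∘L P = P

/-- A faithful normal semifinite trace on a von Neumann algebra `N`, together with its
real-valued extension `τℝ` to trace-class operators. -/
structure Trace (N : VonNeumannAlgebra H) where
  τ : (H →L[ℂ] H) → ℝ≥0∞
  τℝ : (H →L[ℂ] H) → ℝ
  map_add : ∀ S T : H →L[ℂ] H, S.IsPositive → T.IsPositive → τ (S + T) = τ S + τ T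
  map_smul : ∀ (c : ℝ≥0) (T : H →L[ℂ] H), T.IsPositive → τ ((c : ℝ) • T) = c * τ T
  tracial : ∀ T : H →L[ℂ] H, τ (adjoint T ∘L T) = τ (T ∘L adjoint T)
  faithful : ∀ T : H →L[ℂ] H, T.IsPositive → τ T = 0 → T = 0
  semifinite : ∀ P : H →L[ℂ] H, P ∈ N → IsProjOp P → P ≠ 0 →
    ∃ E : H →L[ℂ] H, E ∈ N ∧ IsProjOp E ∧ P ∘L E = E ∧ E ≠ 0 ∧ τ E < ∞
  τℝ_pos : ∀ T : H →L[ℂ] H, T.IsPositive → τℝ T = (τ T).toReal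
  τℝ_add : ∀ S T A B : H →L[ℂ] H, A.IsPositive → B.IsPositive →
    A ∘L A = adjoint S ∘L S → B ∘L B = adjoint T ∘L T → τ A < ∞ → τ B < ∞ →
    τℝ (S + T) = τℝ S + τℝ T
  τℝ_tracial : ∀ S T A : H →L[ℂ] H, A.IsPositive → A ∘L A = adjoint S ∘L S → τ A < ∞ →
    τℝ (S ∘L T) = τℝ (T ∘L S)

/-- Membership in the "skew corner" `P N Q`. -/
def MemCorner (N : VonNeumannAlgebra H) (P Q T : H →L[ℂ] H) : Prop :=
  T ∈ N ∧ P ∘L T ∘L Q = T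

/-- The projection `N_T^Q` onto `ker T ∩ range Q`. -/
noncomputable def kerProjIn (T Q : H →L[ℂ] H) : H →L[ℂ] H :=
  projOnto (LinearMap.ker (T : H →ₗ[ℂ] H) ⊓ LinearMap.range (Q : H →ₗ[ℂ] H))

variable {N : VonNeumannAlgebra H}

/-- `(P·Q)`-Fredholm for a bounded operator `T ∈ PNQ`. -/
def IsPQFredholm (tr : Trace N) (P Q T : H →L[ℂ] H) : Prop :=
  tr.τ (kerProjIn T Q) < ∞ ∧ tr.τ (kerProjIn (adjoint T) P) < ∞ ∧
  ∃ E : H →L[ℂ] H, E ∈ N ∧ IsProjOp E ∧ P ∘L E = E ∧ tr.τ E < ∞ ∧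
    LinearMap.range ((P - E : H →L[ℂ] H) : H →ₗ[ℂ] H) ≤ LinearMap.range (T : H →ₗ[ℂ] H)

/-- The `(P·Q)`-index `Ind(T) = τ(N_T^Q) − τ(N_{T*}^P)`. -/
noncomputable def pqIndex (tr : Trace N) (P Q T : H →L[ℂ] H) : ℝ :=
  (tr.τ (kerProjIn T Q)).toReal - (tr.τ (kerProjIn (adjoint T) P)).toReal

/-- The ideal `K_N` of `τ`-compact operators: the norm closure of the span of the
`τ`-finite projections in `N`. -/
def tauCompact (tr : Trace N) : Set (H →L[ℂ] H) :=
  closure ((Submodule.span ℂ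
    {E : H →L[ℂ] H | E ∈ N ∧ IsProjOp E ∧ tr.τ E < ∞} : Submodule ℂ (H →L[ℂ] H)) :
    Set (H →L[ℂ] H))


namespace PQAux

/-! ### basic facts about projOnto -/

lemma projOnto_mem (K : Submodule ℂ H) (x : H) : projOnto K x ∈ K.topologicalClosure := by
  haveI : CompleteSpace K.topologicalClosure :=
    K.isClosed_topologicalClosure.completeSpace_coe
  exact (K.topologicalClosure.orthogonalProjectionOnto x).2

lemma sub_projOnto_mem_orthogonal (K : Submodule ℂ H) (x : H) :
    x - projOnto K x ∈ K.topologicalClosureᗮ := by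
  haveI : CompleteSpace K.topologicalClosure :=
    K.isClosed_topologicalClosure.completeSpace_coe
  exact Submodule.sub_starProjection_mem_orthogonal (K := K.topologicalClosure) x

lemma projOnto_eq (K : Submodule ℂ H) {x u : H} (hu : u ∈ K.topologicalClosure)
    (hxu : x - u ∈ K.topologicalClosureᗮ) : projOnto K x = u := by
  haveI : CompleteSpace K.topologicalClosure :=
    K.isClosed_topologicalClosure.completeSpace_coe
  exact Submodule.eq_starProjection_of_mem_orthogonal hu hxu

lemma projOnto_apply_of_mem {K : Submodule ℂ H} {x : H} (hx : x ∈ K.topologicalClosure) :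
    projOnto K x = x :=
  projOnto_eq K hx (by simp)

lemma projOnto_apply_of_mem' {K : Submodule ℂ H} (hK : IsClosed (K : Set H)) {x : H}
    (hx : x ∈ K) : projOnto K x = x :=
  projOnto_apply_of_mem (by rwa [hK.submodule_topologicalClosure_eq])

lemma projOnto_apply_of_mem_orthogonal {K : Submodule ℂ H} {x : H}
    (hx : x ∈ K.topologicalClosureᗮ) : projOnto K x = 0 :=
  projOnto_eq K (zero_mem _) (by simpa using hx)

lemma projOnto_idem (K : Submodule ℂ H) : projOnto K ∘L projOnto K = projOnto K := by
  ext x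
  exact projOnto_apply_of_mem (projOnto_mem K x)

lemma projOnto_inner_left (K : Submodule ℂ H) (x y : H) :
    (inner ℂ (projOnto K x) y : ℂ) = inner ℂ (projOnto K x) (projOnto K y) := by
  have h := sub_projOnto_mem_orthogonal K y
  have := h _ (projOnto_mem K x)
  have h2 : (inner ℂ (projOnto K x) (y - projOnto K y) : ℂ) = 0 := this
  rw [inner_sub_right] at h2
  linear_combination h2

lemma projOnto_selfAdjoint (K : Submodule ℂ H) : IsSelfAdjoint (projOnto K) := by
  rw [ContinuousLinearMap.isSelfAdjoint_iff']
  symm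
  rw [ContinuousLinearMap.eq_adjoint_iff]
  intro x y
  rw [projOnto_inner_left]
  have h := sub_projOnto_mem_orthogonal K x
  have h2 : (inner ℂ (x - projOnto K x) (projOnto K y) : ℂ) = 0 := by
    rw [← inner_conj_symm]
    rw [h _ (projOnto_mem K y)]
    simp
  rw [inner_sub_left] at h2
  linear_combination -h2

lemma isProjOp_projOnto (K : Submodule ℂ H) : IsProjOp (projOnto K) :=
  ⟨projOnto_selfAdjoint K, projOnto_idem K⟩

lemma isProjOp_zero : IsProjOp (0 : H →L[ℂ] H) := ⟨.zero _, by ext x; simp⟩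

lemma isProjOp_isPositive {E : H →L[ℂ] H} (hE : IsProjOp E) : E.IsPositive := by
  refine ⟨hE.1.isSymmetric, fun x => ?_⟩
  have h : E x = E (E x) := by
    conv_lhs => rw [← hE.2]
    rfl
  rw [ContinuousLinearMap.reApplyInnerSelf]
  have : (inner ℂ (E x) x : ℂ) = inner ℂ (E x) (E x) := by
    conv_lhs => rw [h]
    rw [← ContinuousLinearMap.adjoint_inner_left, hE.1.adjoint_eq]
  rw [this]
  exact inner_self_nonneg

lemma range_projOnto (K : Submodule ℂ H) :
    LinearMap.range ((projOnto K : H →L[ℂ] H) : H →ₗ[ℂ] H) = K.topologicalClosure := by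
  apply le_antisymm
  · rintro x ⟨y, rfl⟩
    exact projOnto_mem K y
  · intro x hx
    exact ⟨x, projOnto_apply_of_mem hx⟩

lemma projOnto_eq_zero_of_eq_bot {K : Submodule ℂ H} (hK : K.topologicalClosure = ⊥) :
    projOnto K = 0 := by
  ext x
  simp only [ContinuousLinearMap.zero_apply]
  apply projOnto_apply_of_mem_orthogonal
  rw [hK]
  simp

/-! ### basic facts about IsProjOp -/

lemma projOp_apply_of_mem_range {E : H →L[ℂ] H} (hE : IsProjOp E) {x : H}
    (hx : x ∈ LinearMap.range (E : H →ₗ[ℂ] H)) : E x = x := by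
  obtain ⟨y, rfl⟩ := hx
  conv_rhs => rw [← hE.2]
  rfl

lemma projOp_range_eq_ker {E : H →L[ℂ] H} (hE : IsProjOp E) :
    LinearMap.range (E : H →ₗ[ℂ] H) = LinearMap.ker ((1 - E : H →L[ℂ] H) : H →ₗ[ℂ] H) := by
  ext x
  simp only [LinearMap.mem_ker, ContinuousLinearMap.coe_coe, ContinuousLinearMap.coe_sub', Pi.sub_apply,
    ContinuousLinearMap.one_apply, sub_eq_zero]
  constructor
  · intro hx; exact (projOp_apply_of_mem_range hE hx).symm
  · intro hx; exact ⟨x, hx.symm⟩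

lemma projOp_isClosed_range {E : H →L[ℂ] H} (hE : IsProjOp E) :
    IsClosed (LinearMap.range (E : H →ₗ[ℂ] H) : Set H) := by
  rw [projOp_range_eq_ker hE]
  exact ContinuousLinearMap.isClosed_ker _

lemma projOp_eq_projOnto_range {E : H →L[ℂ] H} (hE : IsProjOp E) :
    E = projOnto (LinearMap.range (E : H →ₗ[ℂ] H)) := by
  ext x
  symm
  apply projOnto_eq
  · rw [(projOp_isClosed_range hE).submodule_topologicalClosure_eq]
    exact ⟨x, rfl⟩
  · rw [(projOp_isClosed_range hE).submodule_topologicalClosure_eq]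
    rintro y ⟨z, rfl⟩
    rw [← inner_conj_symm]
    have : (inner ℂ (x - E x) (E z) : ℂ) = 0 := by
      rw [← ContinuousLinearMap.adjoint_inner_left, hE.1.adjoint_eq, map_sub]
      have : E (E x) = E x := by conv_lhs => rw [show E (E x) = (E ∘L E) x from rfl, hE.2]
      rw [this, sub_self, inner_zero_left]
    rw [show (E : H →ₗ[ℂ] H) z = E z from rfl, this]; simp


/-! ### rank one operators -/

noncomputable def rankOne (e f : H) : H →L[ℂ] H := (innerSL ℂ e).smulRight f

lemma rankOne_apply (e f x : H) : rankOne e f x = (inner ℂ e x : ℂ) • f := rfl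

lemma adjoint_rankOne (e f : H) :
    ContinuousLinearMap.adjoint (rankOne e f) = rankOne f e := by
  symm
  rw [ContinuousLinearMap.eq_adjoint_iff]
  intro x y
  simp only [rankOne_apply, inner_smul_left, inner_smul_right, inner_conj_symm]
  ring

lemma rankOne_comp_rankOne (e f e' f' : H) :
    rankOne e f ∘L rankOne e' f' = (inner ℂ e f' : ℂ) • rankOne e' f := by
  ext x
  simp only [ContinuousLinearMap.comp_apply, rankOne_apply, inner_smul_right,
    ContinuousLinearMap.smul_apply, smul_smul]
  ring_nf

lemma inner_self_unit {e : H} (he : ‖e‖ = 1) : (inner ℂ e e : ℂ) = 1 := by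
  rw [inner_self_eq_norm_sq_to_K, he]; norm_num

lemma isProjOp_rankOne {e : H} (he : ‖e‖ = 1) : IsProjOp (rankOne e e) := by
  constructor
  · rw [ContinuousLinearMap.isSelfAdjoint_iff', adjoint_rankOne]
  · rw [rankOne_comp_rankOne, inner_self_unit he, one_smul]

lemma projOnto_span {e : H} (he : ‖e‖ = 1) :
    projOnto (Submodule.span ℂ {e}) = rankOne e e := by
  have hcl : IsClosed ((Submodule.span ℂ {e} : Submodule ℂ H) : Set H) :=
    Submodule.closed_of_finiteDimensional _
  ext x
  apply projOnto_eq
  · rw [hcl.submodule_topologicalClosure_eq]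
    exact Submodule.smul_mem _ _ (Submodule.mem_span_singleton_self e)
  · rw [hcl.submodule_topologicalClosure_eq]
    intro u hu
    obtain ⟨c, rfl⟩ := Submodule.mem_span_singleton.mp hu
    simp only [rankOne_apply, inner_smul_left, inner_sub_right, inner_smul_right,
      inner_self_unit he]
    ring

/-! ### trace basics -/

variable {N : VonNeumannAlgebra H}

lemma tau_zero (tr : Trace N) : tr.τ 0 = 0 := by
  have h := tr.map_smul 0 0 ContinuousLinearMap.isPositive_zero
  simpa using h

lemma projOnto_comp_projOnto_of_le {M M' : Submodule ℂ H} (hM : IsClosed (M : Set H))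
    (h : M ≤ M') : projOnto M' ∘L projOnto M = projOnto M := by
  ext x
  have h1 : projOnto M x ∈ M := by
    have := projOnto_mem M x
    rwa [hM.submodule_topologicalClosure_eq] at this
  exact projOnto_apply_of_mem (Submodule.le_topologicalClosure _ (h h1))

lemma projOnto_comp_projOnto_of_le' {M M' : Submodule ℂ H} (hM : IsClosed (M : Set H))
    (h : M ≤ M') : projOnto M ∘L projOnto M' = projOnto M := by
  have h1 := congrArg ContinuousLinearMap.adjoint (projOnto_comp_projOnto_of_le hM h)
  rwa [ContinuousLinearMap.adjoint_comp, (projOnto_selfAdjoint M).adjoint_eq,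
    (projOnto_selfAdjoint M').adjoint_eq] at h1

lemma isProjOp_sub {E F : H →L[ℂ] H} (hE : IsProjOp E) (hF : IsProjOp F)
    (h1 : F ∘L E = E) (h2 : E ∘L F = E) : IsProjOp (F - E) := by
  constructor
  · exact hF.1.sub hE.1
  · have : (F - E) ∘L (F - E) = F ∘L F - F ∘L E - (E ∘L F - E ∘L E) := by
      rw [ContinuousLinearMap.comp_sub, ContinuousLinearMap.sub_comp,
        ContinuousLinearMap.sub_comp]
      abel
    rw [this, hF.2, hE.2, h1, h2]
    abel

lemma tau_mono (tr : Trace N) {M M' : Submodule ℂ H} (hM : IsClosed (M : Set H))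
    (hM' : IsClosed (M' : Set H)) (h : M ≤ M') :
    tr.τ (projOnto M) ≤ tr.τ (projOnto M') := by
  have hsub : IsProjOp (projOnto M' - projOnto M) :=
    isProjOp_sub (isProjOp_projOnto M) (isProjOp_projOnto M')
      (projOnto_comp_projOnto_of_le hM h) (projOnto_comp_projOnto_of_le' hM h)
  have hdec : projOnto M' = projOnto M + (projOnto M' - projOnto M) := by abel
  rw [hdec, tr.map_add _ _ (isProjOp_isPositive (isProjOp_projOnto M))
    (isProjOp_isPositive hsub)]
  exact le_self_add

lemma tau_rankOne_congr (tr : Trace N) {e e' : H} (he : ‖e‖ = 1) (he' : ‖e'‖ = 1) :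
    tr.τ (rankOne e e) = tr.τ (rankOne e' e') := by
  have h := tr.tracial (rankOne e e')
  rwa [adjoint_rankOne, rankOne_comp_rankOne, rankOne_comp_rankOne,
    inner_self_unit he', inner_self_unit he, one_smul, one_smul] at h

lemma exists_unit_of_ne_bot {M : Submodule ℂ H} (hM : M ≠ ⊥) :
    ∃ e, e ∈ M ∧ ‖e‖ = 1 := by
  obtain ⟨x, hxM, hx⟩ := Submodule.exists_mem_ne_zero_of_ne_bot hM
  refine ⟨(‖x‖⁻¹ : ℝ) • x, Submodule.smul_of_tower_mem _ _ hxM, ?_⟩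
  rw [norm_smul, norm_inv, norm_norm]
  exact inv_mul_cancel₀ (norm_ne_zero_iff.mpr hx)

lemma projOnto_decomp {M : Submodule ℂ H} [FiniteDimensional ℂ M] {e : H}
    (heM : e ∈ M) (he : ‖e‖ = 1) :
    projOnto M = projOnto (M ⊓ (Submodule.span ℂ {e})ᗮ) + rankOne e e := by
  set M' := M ⊓ (Submodule.span ℂ {e})ᗮ with hM'def
  have hMcl : IsClosed (M : Set H) := Submodule.closed_of_finiteDimensional _
  haveI : FiniteDimensional ℂ M' := Submodule.finiteDimensional_of_le inf_le_left
  have hM'cl : IsClosed (M' : Set H) := Submodule.closed_of_finiteDimensional _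
  ext x
  simp only [ContinuousLinearMap.add_apply, rankOne_apply]
  apply projOnto_eq
  · rw [hMcl.submodule_topologicalClosure_eq]
    have h1 : projOnto M' x ∈ M' := by
      have := projOnto_mem M' x
      rwa [hM'cl.submodule_topologicalClosure_eq] at this
    exact add_mem ((inf_le_left : M ⊓ _ ≤ M) h1) (Submodule.smul_mem _ _ heM)
  · rw [hMcl.submodule_topologicalClosure_eq]
    intro m hm
    have hPx : projOnto M' x ∈ M' := by
      have := projOnto_mem M' x
      rwa [hM'cl.submodule_topologicalClosure_eq] at this
    have hePx : (inner ℂ e (projOnto M' x) : ℂ) = 0 :=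
      ((inf_le_right : M ⊓ _ ≤ _) hPx) e
        (Submodule.mem_span_singleton_self e)
    -- decompose m
    have hm' : m - (inner ℂ e m : ℂ) • e ∈ M' := by
      refine ⟨sub_mem hm (Submodule.smul_mem _ _ heM), ?_⟩
      intro u hu
      obtain ⟨c, rfl⟩ := Submodule.mem_span_singleton.mp hu
      simp only [inner_smul_left, inner_sub_right, inner_smul_right, inner_self_unit he]
      ring
    have horth : x - projOnto M' x ∈ M'ᗮ := by
      have := sub_projOnto_mem_orthogonal M' x
      rwa [hM'cl.submodule_topologicalClosure_eq] at this
    have h1 : (inner ℂ (m - (inner ℂ e m : ℂ) • e) (x - projOnto M' x) : ℂ) = 0 := horth _ hm'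
    have h2 : (inner ℂ e (x - (projOnto M' x + (inner ℂ e x : ℂ) • e)) : ℂ) = 0 := by
      simp only [inner_sub_right, inner_add_right, inner_smul_right, inner_self_unit he,
        hePx]
      ring
    have hme : (inner ℂ (m - (inner ℂ e m : ℂ) • e) ((inner ℂ e x : ℂ) • e) : ℂ) = 0 := by
      have h3 : (inner ℂ e (m - (inner ℂ e m : ℂ) • e) : ℂ) = 0 := by
        simp only [inner_sub_right, inner_smul_right, inner_self_unit he]; ring
      have h4 : (inner ℂ (m - (inner ℂ e m : ℂ) • e) e : ℂ) = 0 := by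
        rw [← inner_conj_symm, h3, map_zero]
      rw [inner_smul_right, h4, mul_zero]
    calc (inner ℂ m (x - (projOnto M' x + (inner ℂ e x : ℂ) • e)) : ℂ)
        = inner ℂ (m - (inner ℂ e m : ℂ) • e) (x - (projOnto M' x + (inner ℂ e x : ℂ) • e))
          + inner ℂ ((inner ℂ e m : ℂ) • e) (x - (projOnto M' x + (inner ℂ e x : ℂ) • e)) := by
          rw [← inner_add_left, sub_add_cancel]
      _ = 0 := by
          rw [inner_smul_left, h2, mul_zero, add_zero]
          have : x - (projOnto M' x + (inner ℂ e x : ℂ) • e)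
              = (x - projOnto M' x) - (inner ℂ e x : ℂ) • e := by abel
          rw [this, inner_sub_right, h1, hme, zero_sub, neg_eq_zero]

lemma finrank_inf_orthogonal_span {M : Submodule ℂ H} [FiniteDimensional ℂ M] {e : H}
    (heM : e ∈ M) (he : ‖e‖ = 1) :
    Module.finrank ℂ (M ⊓ (Submodule.span ℂ {e})ᗮ : Submodule ℂ H) + 1
      = Module.finrank ℂ M := by
  set M' := M ⊓ (Submodule.span ℂ {e})ᗮ with hM'def
  haveI : FiniteDimensional ℂ M' := Submodule.finiteDimensional_of_le inf_le_left
  have hene : e ≠ 0 := by intro h; rw [h, norm_zero] at he; norm_num at he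
  have hsup : M' ⊔ Submodule.span ℂ {e} = M := by
    apply le_antisymm
    · exact sup_le inf_le_left ((Submodule.span_singleton_le_iff_mem e M).mpr heM)
    · intro m hm
      have hm' : m - (inner ℂ e m : ℂ) • e ∈ M' := by
        refine ⟨sub_mem hm (Submodule.smul_mem _ _ heM), ?_⟩
        intro u hu
        obtain ⟨c, rfl⟩ := Submodule.mem_span_singleton.mp hu
        simp only [inner_smul_left, inner_sub_right, inner_smul_right, inner_self_unit he]
        ring
      have : m = (m - (inner ℂ e m : ℂ) • e) + (inner ℂ e m : ℂ) • e := by abel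
      rw [this]
      exact Submodule.add_mem_sup hm' (Submodule.smul_mem _ _
        (Submodule.mem_span_singleton_self e))
  have hinf : M' ⊓ Submodule.span ℂ {e} = ⊥ := by
    rw [eq_bot_iff]
    rintro x ⟨⟨_, hx2⟩, hx3⟩
    have : (inner ℂ x x : ℂ) = 0 := by
      rw [← inner_conj_symm, hx2 x hx3, map_zero]
    simpa [inner_self_eq_zero] using this
  have h := Submodule.finrank_sup_add_finrank_inf_eq M' (Submodule.span ℂ {e})
  rw [hsup, hinf, finrank_span_singleton hene] at h
  simp only [finrank_bot, add_zero] at h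
  omega

lemma tau_projOnto_findim (tr : Trace N) {e₀ : H} (he₀ : ‖e₀‖ = 1) :
    ∀ (n : ℕ) (M : Submodule ℂ H) (_ : FiniteDimensional ℂ M)
      (_ : Module.finrank ℂ M = n),
      tr.τ (projOnto M) = (n : ℝ≥0∞) * tr.τ (rankOne e₀ e₀) := by
  intro n
  induction n with
  | zero =>
    intro M hfd hrk
    have : M = ⊥ := Submodule.finrank_eq_zero.mp hrk
    subst this
    have hbot : IsClosed ((⊥ : Submodule ℂ H) : Set H) := by
      rw [Submodule.bot_coe]; exact isClosed_singleton
    rw [projOnto_eq_zero_of_eq_bot hbot.submodule_topologicalClosure_eq, tau_zero]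
    simp
  | succ n ih =>
    intro M hfd hrk
    have hMne : M ≠ ⊥ := by
      intro h; rw [h] at hrk; simp at hrk
    obtain ⟨e, heM, he⟩ := exists_unit_of_ne_bot hMne
    haveI := hfd
    set M' := M ⊓ (Submodule.span ℂ {e})ᗮ with hM'def
    haveI : FiniteDimensional ℂ M' := Submodule.finiteDimensional_of_le inf_le_left
    have hrk' : Module.finrank ℂ M' = n := by
      have h5 := finrank_inf_orthogonal_span heM he
      rw [← hM'def] at h5
      omega
    have hdec := projOnto_decomp heM he
    rw [hdec, tr.map_add _ _ (isProjOp_isPositive (isProjOp_projOnto M'))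
      (isProjOp_isPositive (isProjOp_rankOne he)),
      ih M' inferInstance hrk', tau_rankOne_congr tr he he₀]
    push_cast
    ring

lemma exists_finrank_le {M : Submodule ℂ H} (h : ¬ FiniteDimensional ℂ M) (n : ℕ) :
    ∃ Nn : Submodule ℂ H, Nn ≤ M ∧ FiniteDimensional ℂ Nn ∧ Module.finrank ℂ Nn = n := by
  induction n with
  | zero => exact ⟨⊥, bot_le, inferInstance, finrank_bot ℂ H⟩
  | succ n ih =>
    obtain ⟨Nn, hle, hfd, hrk⟩ := ih
    haveI := hfd
    have hne : ¬ M ≤ Nn := by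
      intro hM
      exact h (Submodule.finiteDimensional_of_le hM)
    obtain ⟨x, hxM, hxN⟩ : ∃ x, x ∈ M ∧ x ∉ Nn := by
      by_contra hcon
      push_neg at hcon
      exact hne fun y hy => hcon y hy
    have hx0 : x ≠ 0 := fun h0 => hxN (by rw [h0]; exact Nn.zero_mem)
    refine ⟨Nn ⊔ Submodule.span ℂ {x}, sup_le hle
      ((Submodule.span_singleton_le_iff_mem x M).mpr hxM), inferInstance, ?_⟩
    have hinf : Nn ⊓ Submodule.span ℂ {x} = ⊥ := by
      rw [eq_bot_iff]
      rintro y ⟨hy1, hy2⟩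
      obtain ⟨c, rfl⟩ := Submodule.mem_span_singleton.mp hy2
      rcases eq_or_ne c 0 with rfl | hc
      · simp
      · exact absurd (by
          have := Nn.smul_mem c⁻¹ hy1
          rwa [smul_smul, inv_mul_cancel₀ hc, one_smul] at this : x ∈ Nn) hxN
    have h2 := Submodule.finrank_sup_add_finrank_inf_eq Nn (Submodule.span ℂ {x})
    rw [hinf, finrank_span_singleton hx0] at h2
    simp only [finrank_bot, add_zero] at h2
    omega

lemma tau_projOnto_eq_top (tr : Trace N) {M : Submodule ℂ H} (hMcl : IsClosed (M : Set H))
    (h : ¬ FiniteDimensional ℂ M) : tr.τ (projOnto M) = ⊤ := by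
  have hMne : M ≠ ⊥ := by
    rintro rfl
    exact h (inferInstance)
  obtain ⟨e, heM, he⟩ := exists_unit_of_ne_bot hMne
  set c := tr.τ (rankOne e e) with hc
  have hc0 : c ≠ 0 := by
    intro h0
    have h1 : rankOne e e = 0 := tr.faithful _ (isProjOp_isPositive (isProjOp_rankOne he)) h0
    have h2 : rankOne e e e = 0 := by rw [h1]; rfl
    rw [rankOne_apply, inner_self_unit he, one_smul] at h2
    rw [h2, norm_zero] at he
    norm_num at he
  have key : ∀ n : ℕ, (n : ℝ≥0∞) * c ≤ tr.τ (projOnto M) := by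
    intro n
    obtain ⟨Nn, hle, hfd, hrk⟩ := exists_finrank_le h n
    haveI := hfd
    have h1 : tr.τ (projOnto Nn) = (n : ℝ≥0∞) * c := by
      rw [tau_projOnto_findim tr he n Nn hfd hrk]
    rw [← h1]
    exact tau_mono tr (Submodule.closed_of_finiteDimensional _) hMcl hle
  rcases eq_or_ne c ⊤ with hctop | hctop
  · have := key 1
    rw [hctop] at this
    simpa using this
  · by_contra hτ
    obtain ⟨n, hn⟩ := ENNReal.exists_nat_gt ((ENNReal.div_lt_top hτ hc0).ne)
    have h2 : tr.τ (projOnto M) < n * c := by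
      have h3 := (ENNReal.div_lt_iff (Or.inl hc0) (Or.inl hctop)).mp hn
      exact h3
    exact absurd (key n) (not_le.mpr h2)

lemma fd_of_tau_lt_top (tr : Trace N) {M : Submodule ℂ H} (hMcl : IsClosed (M : Set H))
    (h : tr.τ (projOnto M) < ⊤) : FiniteDimensional ℂ M := by
  by_contra hfd
  rw [tau_projOnto_eq_top tr hMcl hfd] at h
  exact absurd h (lt_irrefl _)

lemma fd_range_of_proj (tr : Trace N) {E : H →L[ℂ] H} (hE : IsProjOp E)
    (h : tr.τ E < ⊤) : FiniteDimensional ℂ (LinearMap.range (E : H →ₗ[ℂ] H) : Submodule ℂ H) := by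
  rw [projOp_eq_projOnto_range hE] at h
  exact fd_of_tau_lt_top tr (projOp_isClosed_range hE) h

lemma rankOne_tau_le (tr : Trace N) {M : Submodule ℂ H} (hMcl : IsClosed (M : Set H))
    {e : H} (heM : e ∈ M) (he : ‖e‖ = 1) :
    tr.τ (rankOne e e) ≤ tr.τ (projOnto M) := by
  rw [← projOnto_span he]
  exact tau_mono tr (Submodule.closed_of_finiteDimensional _) hMcl
    ((Submodule.span_singleton_le_iff_mem e M).mpr heM)

/-! ### finite codimension operator ranges are closed -/

lemma fd_of_fd_quotient {V : Type*} [AddCommGroup V] [Module ℂ V] (p : Submodule ℂ V)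
    (h1 : FiniteDimensional ℂ p) (h2 : FiniteDimensional ℂ (V ⧸ p)) :
    FiniteDimensional ℂ V := by
  obtain ⟨q, hq⟩ := Submodule.exists_isCompl p
  haveI := h1; haveI := h2
  haveI : FiniteDimensional ℂ q :=
    LinearEquiv.finiteDimensional (Submodule.quotientEquivOfIsCompl p q hq)
  have hsup : p ⊔ q = ⊤ := hq.sup_eq_top
  haveI : FiniteDimensional ℂ (⊤ : Submodule ℂ V) := by
    rw [← hsup]; infer_instance
  exact LinearEquiv.finiteDimensional (Submodule.topEquiv : (⊤ : Submodule ℂ V) ≃ₗ[ℂ] V)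

lemma fd_comap_subtype {V : Type*} [AddCommGroup V] [Module ℂ V] (M F : Submodule ℂ V)
    [FiniteDimensional ℂ F] : FiniteDimensional ℂ (Submodule.comap M.subtype F) := by
  have hmap : Submodule.map M.subtype (Submodule.comap M.subtype F) = M ⊓ F :=
    Submodule.map_comap_subtype M F
  haveI : FiniteDimensional ℂ ↥(M ⊓ F) := Submodule.finiteDimensional_of_le inf_le_right
  haveI : FiniteDimensional ℂ ↥(Submodule.map M.subtype (Submodule.comap M.subtype F)) := by
    rw [hmap]; infer_instance
  exact LinearEquiv.finiteDimensional
    (Submodule.equivMapOfInjective M.subtype (Submodule.injective_subtype M) _).symm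

lemma isClosed_range_of_finite_codim {X : Type*} [NormedAddCommGroup X] [NormedSpace ℂ X]
    [CompleteSpace X] (B : X →L[ℂ] H) {M F : Submodule ℂ H} (hM : IsClosed (M : Set H))
    [FiniteDimensional ℂ F] (hZM : LinearMap.range (B : X →ₗ[ℂ] H) ≤ M) (hFM : F ≤ M)
    (hMZF : M ≤ LinearMap.range (B : X →ₗ[ℂ] H) ⊔ F) : IsClosed (LinearMap.range (B : X →ₗ[ℂ] H) : Set H) := by
  haveI : CompleteSpace M := hM.completeSpace_coe
  set Z' : Submodule ℂ ↥M := Submodule.comap M.subtype (LinearMap.range (B : X →ₗ[ℂ] H)) with hZ'def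
  -- the quotient M ⧸ Z' is finite dimensional
  haveI hfdF' : FiniteDimensional ℂ (Submodule.comap M.subtype F) := fd_comap_subtype M F
  have hφ : Function.Surjective
      (Z'.mkQ ∘ₗ (Submodule.comap M.subtype F).subtype) := by
    intro w
    obtain ⟨y, rfl⟩ := Z'.mkQ_surjective w
    have hy : (y : H) ∈ LinearMap.range (B : X →ₗ[ℂ] H) ⊔ F := hMZF y.2
    obtain ⟨b, hb, f, hf, hbf⟩ := Submodule.mem_sup.mp hy
    have hfM : f ∈ M := hFM hf
    refine ⟨⟨⟨f, hfM⟩, hf⟩, ?_⟩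
    simp only [LinearMap.comp_apply, Submodule.subtype_apply, Submodule.mkQ_apply]
    rw [Submodule.Quotient.eq]
    show ((⟨f, hfM⟩ : ↥M) - y : H) ∈ LinearMap.range (B : X →ₗ[ℂ] H)
    have h9 : ((⟨f, hfM⟩ : ↥M) - y : H) = f - (y : H) := rfl
    rw [h9]
    have h10 : f - (y : H) = -b := by rw [← hbf]; abel
    rw [h10]
    exact neg_mem hb
  haveI hfdQ : FiniteDimensional ℂ (↥M ⧸ Z') := Module.Finite.of_surjective _ hφ
  obtain ⟨C, hC⟩ := Submodule.exists_isCompl Z'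
  haveI : FiniteDimensional ℂ C :=
    LinearEquiv.finiteDimensional (Submodule.quotientEquivOfIsCompl Z' C hC)
  haveI : CompleteSpace C := FiniteDimensional.complete ℂ C
  have hBmem : ∀ x, B x ∈ M := fun x => hZM ⟨x, rfl⟩
  set B' : X →L[ℂ] ↥M := B.codRestrict M hBmem with hB'def
  have hranB' : LinearMap.range (B' : X →ₗ[ℂ] ↥M) = Z' := by
    ext y
    constructor
    · rintro ⟨x, rfl⟩
      exact ⟨x, rfl⟩
    · rintro ⟨x, hx⟩
      exact ⟨x, Subtype.ext hx⟩
  set Bt : X × ↥C →L[ℂ] ↥M := B'.coprod C.subtypeL with hBtdef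
  have hBt : ∀ (x : X) (c : ↥C), Bt (x, c) = B' x + (c : ↥M) := fun x c => rfl
  have hsurj2 : Function.Surjective Bt := by
    intro y
    have hy : y ∈ Z' ⊔ C := by rw [hC.sup_eq_top]; trivial
    obtain ⟨z, hz, c, hc, rfl⟩ := Submodule.mem_sup.mp hy
    rw [← hranB'] at hz
    obtain ⟨x, hx⟩ := hz
    exact ⟨(x, ⟨c, hc⟩), by rw [hBt]; erw [hx]⟩
  set π : ↥M →ₗ[ℂ] ↥C := C.linearProjOfIsCompl Z' hC.symm with hπdef
  have hπZ : ∀ z ∈ Z', π z = 0 := fun z hz => by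
    rw [hπdef]
    exact Submodule.linearProjOfIsCompl_apply_right hC.symm ⟨z, hz⟩
  have hπC : ∀ c : ↥C, π (c : ↥M) = c := fun c => by
    rw [hπdef]
    exact Submodule.linearProjOfIsCompl_apply_left hC.symm c
  have hπcont : Continuous π := by
    rw [continuous_def]
    intro O hO
    have himg : π ⁻¹' O = Bt '' (Set.univ ×ˢ O) := by
      ext y
      constructor
      · intro hy
        have hmem : y ∈ Z' ⊔ C := by rw [hC.sup_eq_top]; trivial
        obtain ⟨z, hz, c, hc, hsum⟩ := Submodule.mem_sup.mp hmem
        have hπy : π y = ⟨c, hc⟩ := by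
          rw [← hsum, map_add, hπZ z hz, zero_add, hπC ⟨c, hc⟩]
        rw [← hranB'] at hz
        obtain ⟨x, hx⟩ := hz
        refine ⟨(x, ⟨c, hc⟩), ⟨trivial, ?_⟩, by rw [hBt]; erw [hx]; rw [hsum]⟩
        rw [← hπy]; exact hy
      · rintro ⟨⟨x, c⟩, ⟨-, hcO⟩, rfl⟩
        show π (Bt (x, c)) ∈ O
        rw [hBt, map_add, hπZ _ (hranB' ▸ ⟨x, rfl⟩ : B' x ∈ Z'), zero_add, hπC]
        exact hcO
    rw [himg]
    exact (Bt.isOpenMap hsurj2) _ (isOpen_univ.prod hO)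
  have hZ'closed : IsClosed (Z' : Set ↥M) := by
    have : (Z' : Set ↥M) = π ⁻¹' {0} := by
      ext y
      simp only [Set.mem_preimage, Set.mem_singleton_iff, SetLike.mem_coe]
      constructor
      · exact hπZ y
      · intro hy
        have hmem : y ∈ Z' ⊔ C := by rw [hC.sup_eq_top]; trivial
        obtain ⟨z, hz, c, hc, hsum⟩ := Submodule.mem_sup.mp hmem
        have hπy : π y = ⟨c, hc⟩ := by
          rw [← hsum, map_add, hπZ z hz, zero_add, hπC ⟨c, hc⟩]
        rw [hy] at hπy
        have hc0 : c = 0 := by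
          have := congrArg (Subtype.val) hπy
          exact (this.symm : c = 0)
        rw [← hsum, hc0, add_zero]
        exact hz
    rw [this]
    exact isClosed_singleton.preimage hπcont
  have hset : (LinearMap.range (B : X →ₗ[ℂ] H) : Set H) = Subtype.val '' (Z' : Set ↥M) := by
    ext z
    constructor
    · rintro ⟨x, rfl⟩
      exact ⟨⟨B x, hBmem x⟩, ⟨x, rfl⟩, rfl⟩
    · rintro ⟨y, hy, rfl⟩
      exact hy
  rw [hset]
  exact (hM.isClosedEmbedding_subtypeVal).isClosedMap _ hZ'closed

/-! ### algebraic Fredholm index additivity -/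

section Alg

variable {V W X : Type*} [AddCommGroup V] [Module ℂ V] [AddCommGroup W] [Module ℂ W]
  [AddCommGroup X] [Module ℂ X]

lemma alg_ker_phi (f : V →ₗ[ℂ] W) (g : W →ₗ[ℂ] X) :
    LinearMap.range (f ∘ₗ (LinearMap.ker (g ∘ₗ f)).subtype)
      = LinearMap.ker g ⊓ LinearMap.range f := by
  apply le_antisymm
  · rintro - ⟨⟨x, hx⟩, rfl⟩
    exact ⟨hx, ⟨x, rfl⟩⟩
  · rintro y ⟨hy1, ⟨w, rfl⟩⟩
    exact ⟨⟨w, hy1⟩, rfl⟩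

lemma alg_fd_ker (f : V →ₗ[ℂ] W) (g : W →ₗ[ℂ] X)
    (h1 : FiniteDimensional ℂ (LinearMap.ker f))
    (h2 : FiniteDimensional ℂ (LinearMap.ker g)) :
    FiniteDimensional ℂ (LinearMap.ker (g ∘ₗ f)) := by
  haveI := h1; haveI := h2
  set φ := f ∘ₗ (LinearMap.ker (g ∘ₗ f)).subtype with hφ
  haveI hk : FiniteDimensional ℂ (LinearMap.ker φ) := by
    have : LinearMap.ker φ = Submodule.comap (LinearMap.ker (g ∘ₗ f)).subtype
        (LinearMap.ker f) := by
      ext ⟨x, hx⟩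
      simp [hφ]
    rw [this]
    exact fd_comap_subtype _ _
  haveI hr : FiniteDimensional ℂ (LinearMap.range φ) := by
    rw [hφ, alg_ker_phi f g]
    exact Submodule.finiteDimensional_of_le inf_le_left
  exact fd_of_fd_quotient (LinearMap.ker φ) hk
    (LinearEquiv.finiteDimensional (LinearMap.quotKerEquivRange φ).symm)

lemma alg_a2 (f : V →ₗ[ℂ] W) (g : W →ₗ[ℂ] X)
    (h1 : FiniteDimensional ℂ (LinearMap.ker f))
    (h2 : FiniteDimensional ℂ (LinearMap.ker g)) :
    Module.finrank ℂ (LinearMap.ker (g ∘ₗ f))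
      = Module.finrank ℂ (LinearMap.ker f)
        + Module.finrank ℂ ↥(LinearMap.ker g ⊓ LinearMap.range f) := by
  haveI := h1; haveI := h2
  haveI := alg_fd_ker f g h1 h2
  set φ := f ∘ₗ (LinearMap.ker (g ∘ₗ f)).subtype with hφ
  have hrn := LinearMap.finrank_range_add_finrank_ker φ
  have hker : LinearMap.ker φ = Submodule.comap (LinearMap.ker (g ∘ₗ f)).subtype
      (LinearMap.ker f) := by
    ext ⟨x, hx⟩
    simp [hφ]
  have hkerrank : Module.finrank ℂ (LinearMap.ker φ) = Module.finrank ℂ (LinearMap.ker f) := by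
    rw [hker, ← Submodule.finrank_map_subtype_eq, Submodule.map_comap_subtype,
      inf_eq_right.mpr (fun x hx => by simp [LinearMap.mem_ker.mp hx] :
        LinearMap.ker f ≤ LinearMap.ker (g ∘ₗ f))]
  have hrange : LinearMap.range φ = LinearMap.ker g ⊓ LinearMap.range f := alg_ker_phi f g
  rw [hker] at hrn
  rw [← hrn, ← hker, hkerrank, hrange]
  omega

lemma alg_mkq_map_eq_bot (p : Submodule ℂ W) : Submodule.map p.mkQ p = ⊥ := by
  rw [eq_bot_iff]
  rintro x ⟨w, hw, rfl⟩
  simpa [Submodule.mkQ_apply, Submodule.Quotient.mk_eq_zero] using hw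

lemma alg_ker_psi (f : V →ₗ[ℂ] W) (g : W →ₗ[ℂ] X) :
    LinearMap.ker ((LinearMap.range (g ∘ₗ f)).mkQ ∘ₗ g)
      = LinearMap.range f ⊔ LinearMap.ker g := by
  ext w
  simp only [LinearMap.mem_ker, LinearMap.comp_apply, Submodule.mkQ_apply,
    Submodule.Quotient.mk_eq_zero]
  constructor
  · rintro ⟨v, hv⟩
    have : w = f v + (w - f v) := by abel
    rw [this]
    refine Submodule.add_mem_sup ⟨v, rfl⟩ ?_
    have : g (w - f v) = 0 := by
      rw [map_sub, ← hv]
      simp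
    exact LinearMap.mem_ker.mpr this
  · intro hw
    obtain ⟨a, ⟨v, rfl⟩, b, hb, rfl⟩ := Submodule.mem_sup.mp hw
    refine ⟨v, ?_⟩
    have hb0 : g b = 0 := LinearMap.mem_ker.mp hb
    simp [map_add, hb0]

lemma alg_fd_quot_sup (f : V →ₗ[ℂ] W) (g : W →ₗ[ℂ] X)
    (hb1 : FiniteDimensional ℂ (W ⧸ LinearMap.range f)) :
    FiniteDimensional ℂ (W ⧸ (LinearMap.range f ⊔ LinearMap.ker g)) := by
  haveI := hb1
  have hsurj : Function.Surjective
      (Submodule.mapQ (LinearMap.range f) (LinearMap.range f ⊔ LinearMap.ker g)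
        LinearMap.id (by simpa [Submodule.comap_id] using le_sup_left)) := by
    intro w
    obtain ⟨x, rfl⟩ := (LinearMap.range f ⊔ LinearMap.ker g).mkQ_surjective w
    exact ⟨(LinearMap.range f).mkQ x, by simp [Submodule.mapQ_apply]⟩
  exact Module.Finite.of_surjective _ hsurj

lemma alg_b2 (f : V →ₗ[ℂ] W) (g : W →ₗ[ℂ] X)
    (hb1 : FiniteDimensional ℂ (W ⧸ LinearMap.range f))
    (hb3 : FiniteDimensional ℂ (X ⧸ LinearMap.range g)) :
    FiniteDimensional ℂ (X ⧸ LinearMap.range (g ∘ₗ f)) ∧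
    Module.finrank ℂ (X ⧸ LinearMap.range (g ∘ₗ f))
      = Module.finrank ℂ (W ⧸ (LinearMap.range f ⊔ LinearMap.ker g))
        + Module.finrank ℂ (X ⧸ LinearMap.range g) := by
  haveI := hb1; haveI := hb3
  have hle : LinearMap.range (g ∘ₗ f) ≤ LinearMap.range g := by
    rintro - ⟨v, rfl⟩; exact ⟨f v, rfl⟩
  set K := LinearMap.range (g ∘ₗ f) with hK
  set Sub := Submodule.map K.mkQ (LinearMap.range g) with hSub
  set ψ := K.mkQ ∘ₗ g with hψ
  have hranψ : LinearMap.range ψ = Sub := by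
    rw [hψ, LinearMap.range_comp, hSub]
  haveI hfdSub : FiniteDimensional ℂ Sub := by
    rw [← hranψ]
    have : FiniteDimensional ℂ (W ⧸ LinearMap.ker ψ) := by
      rw [hψ, alg_ker_psi f g]
      exact alg_fd_quot_sup f g hb1
    exact LinearEquiv.finiteDimensional (LinearMap.quotKerEquivRange ψ)
  have hequiv := Submodule.quotientQuotientEquivQuotient K (LinearMap.range g) hle
  haveI hfdQQ : FiniteDimensional ℂ ((X ⧸ K) ⧸ Sub) := by
    rw [hSub]
    exact LinearEquiv.finiteDimensional hequiv.symm
  haveI hfdXK : FiniteDimensional ℂ (X ⧸ K) := fd_of_fd_quotient Sub hfdSub hfdQQ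
  refine ⟨hfdXK, ?_⟩
  have h1 := Submodule.finrank_quotient_add_finrank Sub
  have h2 : Module.finrank ℂ ((X ⧸ K) ⧸ Sub) = Module.finrank ℂ (X ⧸ LinearMap.range g) := by
    rw [hSub]
    exact LinearEquiv.finrank_eq hequiv
  have h3 : Module.finrank ℂ Sub
      = Module.finrank ℂ (W ⧸ (LinearMap.range f ⊔ LinearMap.ker g)) := by
    rw [← hranψ, ← LinearEquiv.finrank_eq (LinearMap.quotKerEquivRange ψ), hψ,
      alg_ker_psi f g]
  omega

lemma alg_b1 (f : V →ₗ[ℂ] W) (g : W →ₗ[ℂ] X)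
    (hb1 : FiniteDimensional ℂ (W ⧸ LinearMap.range f))
    (ha3 : FiniteDimensional ℂ (LinearMap.ker g)) :
    Module.finrank ℂ (W ⧸ LinearMap.range f)
        + Module.finrank ℂ ↥(LinearMap.ker g ⊓ LinearMap.range f)
      = Module.finrank ℂ (W ⧸ (LinearMap.range f ⊔ LinearMap.ker g))
        + Module.finrank ℂ (LinearMap.ker g) := by
  haveI := hb1; haveI := ha3
  set R := LinearMap.range f with hR
  set Sub₂ := Submodule.map R.mkQ (LinearMap.ker g) with hSub₂
  have hmapsup : Submodule.map R.mkQ (R ⊔ LinearMap.ker g) = Sub₂ := by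
    rw [Submodule.map_sup, alg_mkq_map_eq_bot R, bot_sup_eq, hSub₂]
  have hequiv := Submodule.quotientQuotientEquivQuotient R (R ⊔ LinearMap.ker g) le_sup_left
  have h1 := Submodule.finrank_quotient_add_finrank Sub₂
  have h2 : Module.finrank ℂ ((W ⧸ R) ⧸ Sub₂)
      = Module.finrank ℂ (W ⧸ (R ⊔ LinearMap.ker g)) := by
    rw [← hmapsup]
    exact LinearEquiv.finrank_eq hequiv
  -- rank-nullity for χ
  set χ := R.mkQ ∘ₗ (LinearMap.ker g).subtype with hχ
  have hranχ : LinearMap.range χ = Sub₂ := by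
    rw [hχ, LinearMap.range_comp, Submodule.range_subtype, hSub₂]
  have hkerχ : LinearMap.ker χ
      = Submodule.comap (LinearMap.ker g).subtype R := by
    ext ⟨x, hx⟩
    simp [hχ, Submodule.Quotient.mk_eq_zero]
  have h3 := LinearMap.finrank_range_add_finrank_ker χ
  have h4 : Module.finrank ℂ (LinearMap.ker χ)
      = Module.finrank ℂ ↥(LinearMap.ker g ⊓ R) := by
    rw [hkerχ, ← Submodule.finrank_map_subtype_eq, Submodule.map_comap_subtype]
  rw [hranχ, h4] at h3
  omega

lemma alg_index (f : V →ₗ[ℂ] W) (g : W →ₗ[ℂ] X)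
    (ha1 : FiniteDimensional ℂ (LinearMap.ker f))
    (ha3 : FiniteDimensional ℂ (LinearMap.ker g))
    (hb1 : FiniteDimensional ℂ (W ⧸ LinearMap.range f))
    (hb3 : FiniteDimensional ℂ (X ⧸ LinearMap.range g)) :
    Module.finrank ℂ (LinearMap.ker (g ∘ₗ f))
        + Module.finrank ℂ (X ⧸ LinearMap.range g)
        + Module.finrank ℂ (W ⧸ LinearMap.range f)
      = Module.finrank ℂ (LinearMap.ker g) + Module.finrank ℂ (LinearMap.ker f)
        + Module.finrank ℂ (X ⧸ LinearMap.range (g ∘ₗ f)) := by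
  have h1 := alg_a2 f g ha1 ha3
  have h2 := (alg_b2 f g hb1 hb3).2
  have h3 := alg_b1 f g hb1 ha3
  omega

end Alg

/-! ### membership in the von Neumann algebra via the double commutant -/

lemma star_mem_centralizer_of {s : Set (H →L[ℂ] H)} (hs : ∀ a ∈ s, star a ∈ s)
    {y : H →L[ℂ] H} (hy : y ∈ Set.centralizer s) : star y ∈ Set.centralizer s := by
  intro a ha
  have h1 : star a * y = y * star a := hy (star a) (hs a ha)
  calc a * star y = star (y * star a) := by rw [star_mul, star_star]
    _ = star (star a * y) := by rw [h1]
    _ = star y * a := by rw [star_mul, star_star]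

lemma projOnto_mem_vonNeumann (N : VonNeumannAlgebra H) {Z : Submodule ℂ H}
    (hZcl : IsClosed (Z : Set H))
    (hinv : ∀ y ∈ Set.centralizer (N : Set (H →L[ℂ] H)), ∀ x ∈ Z, y x ∈ Z) :
    projOnto Z ∈ N := by
  have hcc := N.centralizer_centralizer
  have : projOnto Z ∈ ((N : Set (H →L[ℂ] H)).centralizer).centralizer := by
    intro y hy
    have hstar : star y ∈ Set.centralizer (N : Set (H →L[ℂ] H)) :=
      star_mem_centralizer_of (fun a ha => star_mem ha) hy
    ext x
    show y (projOnto Z x) = projOnto Z (y x)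
    symm
    apply projOnto_eq
    · rw [hZcl.submodule_topologicalClosure_eq]
      apply hinv y hy
      have := projOnto_mem Z x
      rwa [hZcl.submodule_topologicalClosure_eq] at this
    · rw [hZcl.submodule_topologicalClosure_eq]
      intro z hz
      have h1 : y x - y (projOnto Z x) = y (x - projOnto Z x) := by rw [map_sub]
      rw [h1, ← ContinuousLinearMap.adjoint_inner_left]
      have h2 : ContinuousLinearMap.adjoint y z ∈ Z := by
        have : ContinuousLinearMap.adjoint y = star y := rfl
        rw [this]
        exact hinv (star y) hstar z hz
      have h3 := sub_projOnto_mem_orthogonal Z x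
      rw [hZcl.submodule_topologicalClosure_eq] at h3
      exact h3 _ h2
  rwa [hcc] at this

/-! ### cokernel as orthogonal complement -/

lemma orthogonal_range_eq_ker_adjoint (T : H →L[ℂ] H) :
    (LinearMap.range (T : H →ₗ[ℂ] H))ᗮ = LinearMap.ker ((ContinuousLinearMap.adjoint T : H →L[ℂ] H) : H →ₗ[ℂ] H) := by
  ext v
  rw [Submodule.mem_orthogonal, LinearMap.mem_ker]
  constructor
  · intro hv
    have h1 : ∀ y : H, (inner ℂ y (ContinuousLinearMap.adjoint T v) : ℂ) = 0 := by
      intro y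
      rw [ContinuousLinearMap.adjoint_inner_right]
      exact hv _ ⟨y, rfl⟩
    have := h1 (ContinuousLinearMap.adjoint T v)
    rwa [inner_self_eq_zero] at this
  · intro hv u hu
    obtain ⟨y, rfl⟩ := hu
    rw [show (T : H →ₗ[ℂ] H) y = T y from rfl, ← ContinuousLinearMap.adjoint_inner_right,
      show ContinuousLinearMap.adjoint T v = 0 from hv, inner_zero_right]

noncomputable def cokerEquiv {M Z : Submodule ℂ H} (hM : IsClosed (M : Set H))
    (hZ : IsClosed (Z : Set H)) (hZM : Z ≤ M) (R : Submodule ℂ ↥M)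
    (hR : Submodule.map M.subtype R = Z) :
    (↥M ⧸ R) ≃ₗ[ℂ] ↥(M ⊓ Zᗮ) := by
  haveI : CompleteSpace Z := hZ.completeSpace_coe
  set C : Submodule ℂ ↥M := Submodule.comap M.subtype Zᗮ with hCdef
  have hcompl : IsCompl R C := by
    constructor
    · rw [disjoint_iff]
      rw [eq_bot_iff]
      rintro x ⟨hx1, hx2⟩
      have hxZ : (x : H) ∈ Z := by
        rw [← hR]; exact ⟨x, hx1, rfl⟩
      have hxO : (x : H) ∈ Zᗮ := hx2
      have : (inner ℂ (x : H) (x : H) : ℂ) = 0 := hxO (x : H) hxZ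
      rw [inner_self_eq_zero] at this
      exact (ZeroMemClass.coe_eq_zero).mp this
    · rw [codisjoint_iff, eq_top_iff]
      intro y _hy
      have hz : projOnto Z (y : H) ∈ Z := by
        have := projOnto_mem Z (y : H)
        rwa [hZ.submodule_topologicalClosure_eq] at this
      have hzR : projOnto Z (y : H) ∈ Submodule.map M.subtype R := by rw [hR]; exact hz
      obtain ⟨x, hxR, hx⟩ := hzR
      have hcmem : y - x ∈ C := by
        rw [hCdef]
        show ((y - x : ↥M) : H) ∈ Zᗮ
        have h5 : ((y - x : ↥M) : H) = (y : H) - projOnto Z (y : H) := by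
          rw [← hx]; rfl
        rw [h5]
        have := sub_projOnto_mem_orthogonal Z (y : H)
        rwa [hZ.submodule_topologicalClosure_eq] at this
      have : y = x + (y - x) := by abel
      rw [this]
      exact Submodule.add_mem_sup hxR hcmem
  have hmapC : Submodule.map M.subtype C = M ⊓ Zᗮ := by
    rw [hCdef, Submodule.map_comap_subtype]
  exact (Submodule.quotientEquivOfIsCompl R C hcompl) ≪≫ₗ
    (Submodule.equivMapOfInjective M.subtype (Submodule.injective_subtype M) C) ≪≫ₗ
    (LinearEquiv.ofEq _ _ hmapC)

/-! ### restrictions of operators to corners -/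

noncomputable def restrict2 (A : H →L[ℂ] H) (D R : Submodule ℂ H) (h : ∀ x ∈ D, A x ∈ R) :
    ↥D →ₗ[ℂ] ↥R :=
  ((A : H →ₗ[ℂ] H).domRestrict D).codRestrict R (fun x => h x x.2)

lemma restrict2_apply (A : H →L[ℂ] H) (D R : Submodule ℂ H) (h : ∀ x ∈ D, A x ∈ R)
    (x : ↥D) : (restrict2 A D R h x : H) = A x := rfl

lemma restrict2_comp (A B : H →L[ℂ] H) (D R S' : Submodule ℂ H) (hA : ∀ x ∈ D, A x ∈ R)
    (hB : ∀ x ∈ R, B x ∈ S') :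
    restrict2 B R S' hB ∘ₗ restrict2 A D R hA
      = restrict2 (B ∘L A) D S' (fun x hx => hB _ (hA x hx)) := rfl

lemma ker_restrict2 (A : H →L[ℂ] H) (D R : Submodule ℂ H) (h : ∀ x ∈ D, A x ∈ R) :
    LinearMap.ker (restrict2 A D R h) = Submodule.comap D.subtype (LinearMap.ker (A : H →ₗ[ℂ] H)) := by
  ext ⟨x, hx⟩
  simp only [LinearMap.mem_ker, Submodule.mem_comap, Submodule.subtype_apply]
  constructor
  · intro h0
    have := congrArg (Subtype.val) h0
    exact this
  · intro h0
    exact Subtype.ext h0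

lemma map_ker_restrict2 (A : H →L[ℂ] H) (D R : Submodule ℂ H) (h : ∀ x ∈ D, A x ∈ R) :
    Submodule.map D.subtype (LinearMap.ker (restrict2 A D R h))
      = LinearMap.ker (A : H →ₗ[ℂ] H) ⊓ D := by
  rw [ker_restrict2, Submodule.map_comap_subtype, inf_comm]

lemma map_range_restrict2 (A : H →L[ℂ] H) (D R : Submodule ℂ H) (h : ∀ x ∈ D, A x ∈ R)
    (hAD : ∀ x, A x ∈ Submodule.map (A : H →ₗ[ℂ] H) D) :
    Submodule.map R.subtype (LinearMap.range (restrict2 A D R h)) = LinearMap.range (A : H →ₗ[ℂ] H) := by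
  apply le_antisymm
  · rintro - ⟨-, ⟨⟨x, hx⟩, rfl⟩, rfl⟩
    exact ⟨x, rfl⟩
  · rintro - ⟨v, rfl⟩
    obtain ⟨w, hw, hww⟩ := hAD v
    exact ⟨restrict2 A D R h ⟨w, hw⟩, ⟨⟨w, hw⟩, rfl⟩, hww⟩

lemma finrank_ker_restrict2 (A : H →L[ℂ] H) (D R : Submodule ℂ H) (h : ∀ x ∈ D, A x ∈ R) :
    Module.finrank ℂ (LinearMap.ker (restrict2 A D R h))
      = Module.finrank ℂ ↥(LinearMap.ker (A : H →ₗ[ℂ] H) ⊓ D) := by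
  rw [← map_ker_restrict2 A D R h, Submodule.finrank_map_subtype_eq]

/-! ### corner identities -/

lemma corner_pt {Pp Qq A : H →L[ℂ] H} (h : Pp ∘L A ∘L Qq = A) (x : H) :
    A x = Pp (A (Qq x)) := by
  conv_lhs => rw [← h]
  rfl

lemma corner_right_pt {Pp Qq A : H →L[ℂ] H} (h : Pp ∘L A ∘L Qq = A)
    (hQq : Qq ∘L Qq = Qq) (x : H) : A (Qq x) = A x := by
  have h1 := corner_pt h (Qq x)
  have h2 : Qq (Qq x) = Qq x := by
    conv_lhs => rw [show Qq (Qq x) = (Qq ∘L Qq) x from rfl, hQq]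
  rw [h1, h2, ← corner_pt h x]

lemma corner_left_pt {Pp Qq A : H →L[ℂ] H} (h : Pp ∘L A ∘L Qq = A)
    (hPp : Pp ∘L Pp = Pp) (x : H) : Pp (A x) = A x := by
  conv_lhs => rw [corner_pt h x]
  rw [show Pp (Pp (A (Qq x))) = (Pp ∘L Pp) (A (Qq x)) from rfl, hPp, ← corner_pt h x]

lemma corner_adjoint {Pp Qq A : H →L[ℂ] H} (hPp : IsSelfAdjoint Pp)
    (hQq : IsSelfAdjoint Qq) (h : Pp ∘L A ∘L Qq = A) :
    Qq ∘L ContinuousLinearMap.adjoint A ∘L Pp = ContinuousLinearMap.adjoint A := by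
  conv_rhs => rw [← h]
  rw [ContinuousLinearMap.adjoint_comp, ContinuousLinearMap.adjoint_comp,
    hPp.adjoint_eq, hQq.adjoint_eq]
  ext x
  rfl

lemma fd_ker_restrict2 (A : H →L[ℂ] H) (D R : Submodule ℂ H) (h : ∀ x ∈ D, A x ∈ R)
    (hfd : FiniteDimensional ℂ ↥(LinearMap.ker (A : H →ₗ[ℂ] H) ⊓ D)) :
    FiniteDimensional ℂ (LinearMap.ker (restrict2 A D R h)) := by
  have e := Submodule.equivMapOfInjective D.subtype (Submodule.injective_subtype D)
    (LinearMap.ker (restrict2 A D R h))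
  rw [map_ker_restrict2] at e
  haveI := hfd
  exact LinearEquiv.finiteDimensional e.symm

lemma fd_inf_of_fd_ker (A : H →L[ℂ] H) (D R : Submodule ℂ H) (h : ∀ x ∈ D, A x ∈ R)
    (hfd : FiniteDimensional ℂ (LinearMap.ker (restrict2 A D R h))) :
    FiniteDimensional ℂ ↥(LinearMap.ker (A : H →ₗ[ℂ] H) ⊓ D) := by
  have e := Submodule.equivMapOfInjective D.subtype (Submodule.injective_subtype D)
    (LinearMap.ker (restrict2 A D R h))
  rw [map_ker_restrict2] at e
  haveI := hfd
  exact LinearEquiv.finiteDimensional e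

end PQAux

set_option maxHeartbeats 2000000 in
/-- If `T ∈ PNQ` is `(P·Q)`-Fredholm and `S ∈ GNP` is `(G·P)`-Fredholm, then
`ST ∈ GNQ` is `(G·Q)`-Fredholm and `Ind(ST) = Ind(S) + Ind(T)`. -/
theorem pqIndex_comp (tr : Trace N) (G P Q T S : H →L[ℂ] H)
    (hG : G ∈ N) (hGproj : IsProjOp G) (hP : P ∈ N) (hPproj : IsProjOp P)
    (hQ : Q ∈ N) (hQproj : IsProjOp Q)
    (hT : MemCorner N P Q T) (hS : MemCorner N G P S)
    (hTF : IsPQFredholm tr P Q T) (hSF : IsPQFredholm tr G P S) :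
    MemCorner N G Q (S ∘L T) ∧ IsPQFredholm tr G Q (S ∘L T) ∧
      pqIndex tr G Q (S ∘L T) = pqIndex tr G P S + pqIndex tr P Q T := by
  classical
  obtain ⟨hTN, hTc⟩ := hT
  obtain ⟨hSN, hSc⟩ := hS
  have hG2 := hGproj.2
  have hP2 := hPproj.2
  have hQ2 := hQproj.2
  have hTQ : ∀ x, T (Q x) = T x := PQAux.corner_right_pt hTc hQ2
  have hPT : ∀ x, P (T x) = T x := PQAux.corner_left_pt hTc hP2
  have hSP : ∀ x, S (P x) = S x := PQAux.corner_right_pt hSc hP2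
  have hGS : ∀ x, G (S x) = S x := PQAux.corner_left_pt hSc hG2
  have hranT : ∀ x, T x ∈ LinearMap.range (P : H →ₗ[ℂ] H) := fun x => ⟨T x, hPT x⟩
  have hranS : ∀ x, S x ∈ LinearMap.range (G : H →ₗ[ℂ] H) := fun x => ⟨S x, hGS x⟩
  have hSTc : G ∘L (S ∘L T) ∘L Q = S ∘L T := by
    ext x
    simp only [ContinuousLinearMap.comp_apply]
    rw [hTQ x, hGS (T x)]
  have hSTmem : (S ∘L T) ∈ N := mul_mem hSN hTN
  have hTadjc := PQAux.corner_adjoint hPproj.1 hQproj.1 hTc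
  have hSadjc := PQAux.corner_adjoint hGproj.1 hPproj.1 hSc
  have hPSadj : ∀ x, P (ContinuousLinearMap.adjoint S x) = ContinuousLinearMap.adjoint S x :=
    PQAux.corner_left_pt hSadjc hP2
  have hadjST : ContinuousLinearMap.adjoint (S ∘L T)
      = ContinuousLinearMap.adjoint T ∘L ContinuousLinearMap.adjoint S :=
    ContinuousLinearMap.adjoint_comp S T
  have hzeroN : (0 : H →L[ℂ] H) ∈ N := by simpa using sub_mem hG hG
  have hclP : IsClosed (LinearMap.range (P : H →ₗ[ℂ] H) : Set H) := PQAux.projOp_isClosed_range hPproj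
  have hclQ : IsClosed (LinearMap.range (Q : H →ₗ[ℂ] H) : Set H) := PQAux.projOp_isClosed_range hQproj
  have hclG : IsClosed (LinearMap.range (G : H →ₗ[ℂ] H) : Set H) := PQAux.projOp_isClosed_range hGproj
  have hclKer : ∀ (A R' : H →L[ℂ] H), IsProjOp R' →
      IsClosed ((LinearMap.ker (A : H →ₗ[ℂ] H) ⊓ LinearMap.range (R' : H →ₗ[ℂ] H) : Submodule ℂ H) : Set H) := by
    intro A R' hR'
    rw [Submodule.coe_inf]
    exact (ContinuousLinearMap.isClosed_ker A).inter (PQAux.projOp_isClosed_range hR')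
  refine ⟨⟨hSTmem, hSTc⟩, ?_⟩
  obtain ⟨hτKT, hτKT', ET, hETN, hETproj, hPET, hτET, hranET⟩ := hTF
  obtain ⟨hτKS, hτKS', ES, hESN, hESproj, hGES, hτES, hranES⟩ := hSF
  have hETP : ET ∘L P = ET := by
    have h9 := congrArg ContinuousLinearMap.adjoint hPET
    rwa [ContinuousLinearMap.adjoint_comp, hETproj.1.adjoint_eq, hPproj.1.adjoint_eq] at h9
  have hESG : ES ∘L G = ES := by
    have h9 := congrArg ContinuousLinearMap.adjoint hGES
    rwa [ContinuousLinearMap.adjoint_comp, hESproj.1.adjoint_eq, hGproj.1.adjoint_eq] at h9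
  have hPETpt : ∀ x, P (ET x) = ET x := fun x => congrArg (fun (A : H →L[ℂ] H) => A x) hPET
  have hGESpt : ∀ x, G (ES x) = ES x := fun x => congrArg (fun (A : H →L[ℂ] H) => A x) hGES
  have hPdec : ∀ x, P x = (P - ET) x + ET x := by
    intro x; simp only [ContinuousLinearMap.sub_apply]; abel
  have hGdec : ∀ x, G x = (G - ES) x + ES x := by
    intro x; simp only [ContinuousLinearMap.sub_apply]; abel
  rcases subsingleton_or_nontrivial H with hsub | hnt
  · -- trivial Hilbert space
    have hopeq : ∀ A B : H →L[ℂ] H, A = B := fun A B =>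
      ContinuousLinearMap.ext fun x => Subsingleton.elim _ _
    constructor
    · refine ⟨?_, ?_, ⟨0, hzeroN, PQAux.isProjOp_zero, ?_, ?_, ?_⟩⟩
      · rw [hopeq (kerProjIn (S ∘L T) Q) 0, PQAux.tau_zero tr]; simp
      · rw [hopeq (kerProjIn (ContinuousLinearMap.adjoint (S ∘L T)) G) 0,
          PQAux.tau_zero tr]; simp
      · rw [hopeq (G ∘L 0) 0]
      · rw [PQAux.tau_zero tr]; simp
      · intro x hx
        exact ⟨0, Subsingleton.elim _ _⟩
    · show (tr.τ (kerProjIn (S ∘L T) Q)).toReal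
          - (tr.τ (kerProjIn (ContinuousLinearMap.adjoint (S ∘L T)) G)).toReal
        = ((tr.τ (kerProjIn S P)).toReal
            - (tr.τ (kerProjIn (ContinuousLinearMap.adjoint S) G)).toReal)
          + ((tr.τ (kerProjIn T Q)).toReal
            - (tr.τ (kerProjIn (ContinuousLinearMap.adjoint T) P)).toReal)
      rw [hopeq (kerProjIn (S ∘L T) Q) 0,
        hopeq (kerProjIn (ContinuousLinearMap.adjoint (S ∘L T)) G) 0,
        hopeq (kerProjIn S P) 0, hopeq (kerProjIn (ContinuousLinearMap.adjoint S) G) 0,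
        hopeq (kerProjIn T Q) 0, hopeq (kerProjIn (ContinuousLinearMap.adjoint T) P) 0,
        PQAux.tau_zero tr]
      norm_num
  · -- nontrivial Hilbert space
    obtain ⟨x0, hx0⟩ := exists_ne (0 : H)
    have htb : (⊤ : Submodule ℂ H) ≠ ⊥ := by
      intro h
      have : x0 ∈ (⊥ : Submodule ℂ H) := by rw [← h]; trivial
      exact hx0 (by simpa using this)
    obtain ⟨e₀, -, he₀⟩ := PQAux.exists_unit_of_ne_bot htb
    set c := tr.τ (PQAux.rankOne e₀ e₀) with hc
    rcases eq_or_ne c ⊤ with hctop | hctop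
    · -- infinite trace of minimal projections: everything trivial
      have hprojzero : ∀ Ep : H →L[ℂ] H, IsProjOp Ep → tr.τ Ep < ⊤ → Ep = 0 := by
        intro Ep hEp hlt
        by_contra hne
        have hrne : LinearMap.range (Ep : H →ₗ[ℂ] H) ≠ ⊥ := by
          intro hbot
          apply hne
          ext x
          have hmem : Ep x ∈ LinearMap.range (Ep : H →ₗ[ℂ] H) := ⟨x, rfl⟩
          rw [hbot] at hmem
          simpa using hmem
        obtain ⟨e, heM, he⟩ := PQAux.exists_unit_of_ne_bot hrne
        have h1 : tr.τ (PQAux.rankOne e e) ≤ tr.τ (projOnto (LinearMap.range (Ep : H →ₗ[ℂ] H))) :=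
          PQAux.rankOne_tau_le tr (PQAux.projOp_isClosed_range hEp) heM he
        rw [← PQAux.projOp_eq_projOnto_range hEp,
          PQAux.tau_rankOne_congr tr he he₀, ← hc, hctop] at h1
        exact absurd (lt_of_le_of_lt h1 hlt) (lt_irrefl _)
      have hbotM : ∀ (M : Submodule ℂ H), IsClosed (M : Set H) →
          tr.τ (projOnto M) < ⊤ → M = ⊥ := by
        intro M hMcl hlt
        by_contra hne
        obtain ⟨e, heM, he⟩ := PQAux.exists_unit_of_ne_bot hne
        have h1 := PQAux.rankOne_tau_le tr hMcl heM he
        rw [PQAux.tau_rankOne_congr tr he he₀, ← hc, hctop] at h1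
        exact absurd (lt_of_le_of_lt h1 hlt) (lt_irrefl _)
      have hKT0 : LinearMap.ker (T : H →ₗ[ℂ] H) ⊓ LinearMap.range (Q : H →ₗ[ℂ] H) = ⊥ :=
        hbotM _ (hclKer T Q hQproj) hτKT
      have hKT'0 : LinearMap.ker ((ContinuousLinearMap.adjoint T : H →L[ℂ] H) : H →ₗ[ℂ] H) ⊓ LinearMap.range (P : H →ₗ[ℂ] H) = ⊥ :=
        hbotM _ (hclKer _ P hPproj) hτKT'
      have hKS0 : LinearMap.ker (S : H →ₗ[ℂ] H) ⊓ LinearMap.range (P : H →ₗ[ℂ] H) = ⊥ :=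
        hbotM _ (hclKer S P hPproj) hτKS
      have hKS'0 : LinearMap.ker ((ContinuousLinearMap.adjoint S : H →L[ℂ] H) : H →ₗ[ℂ] H) ⊓ LinearMap.range (G : H →ₗ[ℂ] H) = ⊥ :=
        hbotM _ (hclKer _ G hGproj) hτKS'
      have hET0 : ET = 0 := hprojzero ET hETproj hτET
      have hES0 : ES = 0 := hprojzero ES hESproj hτES
      have hranPT : LinearMap.range (P : H →ₗ[ℂ] H) ≤ LinearMap.range (T : H →ₗ[ℂ] H) := by
        rw [hET0, sub_zero] at hranET; exact hranET
      have hranGS : LinearMap.range (G : H →ₗ[ℂ] H) ≤ LinearMap.range (S : H →ₗ[ℂ] H) := by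
        rw [hES0, sub_zero] at hranES; exact hranES
      have hranGST : LinearMap.range (G : H →ₗ[ℂ] H) ≤ LinearMap.range ((S ∘L T : H →L[ℂ] H) : H →ₗ[ℂ] H) := by
        rintro y hy
        obtain ⟨w, rfl⟩ := hranGS hy
        obtain ⟨v, hv⟩ := hranPT ⟨w, rfl⟩
        exact ⟨v, by show S (T v) = S w; rw [← hSP w, ← show T v = P w from hv]⟩
      have hKST0 : LinearMap.ker ((S ∘L T : H →L[ℂ] H) : H →ₗ[ℂ] H) ⊓ LinearMap.range (Q : H →ₗ[ℂ] H) = ⊥ := by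
        rw [eq_bot_iff]
        rintro x ⟨hx1, hx2⟩
        have hSTx : S (T x) = 0 := LinearMap.mem_ker.mp hx1
        have hTx : T x ∈ LinearMap.ker (S : H →ₗ[ℂ] H) ⊓ LinearMap.range (P : H →ₗ[ℂ] H) :=
          ⟨LinearMap.mem_ker.mpr hSTx, hranT x⟩
        rw [hKS0] at hTx
        have hTx0 : T x = 0 := by simpa using hTx
        have hxk : x ∈ LinearMap.ker (T : H →ₗ[ℂ] H) ⊓ LinearMap.range (Q : H →ₗ[ℂ] H) :=
          ⟨LinearMap.mem_ker.mpr hTx0, hx2⟩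
        rw [hKT0] at hxk
        simpa using hxk
      have hKST'0 : LinearMap.ker ((ContinuousLinearMap.adjoint (S ∘L T) : H →L[ℂ] H) : H →ₗ[ℂ] H)
          ⊓ LinearMap.range (G : H →ₗ[ℂ] H) = ⊥ := by
        rw [eq_bot_iff]
        rintro x ⟨hx1, hx2⟩
        have hx1' : ContinuousLinearMap.adjoint T (ContinuousLinearMap.adjoint S x) = 0 := by
          have := LinearMap.mem_ker.mp hx1
          rwa [hadjST] at this
        have hSx : ContinuousLinearMap.adjoint S x
            ∈ LinearMap.ker ((ContinuousLinearMap.adjoint T : H →L[ℂ] H) : H →ₗ[ℂ] H) ⊓ LinearMap.range (P : H →ₗ[ℂ] H) :=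
          ⟨LinearMap.mem_ker.mpr hx1', ⟨_, hPSadj x⟩⟩
        rw [hKT'0] at hSx
        have hSx0 : ContinuousLinearMap.adjoint S x = 0 := by simpa using hSx
        have hxk : x ∈ LinearMap.ker ((ContinuousLinearMap.adjoint S : H →L[ℂ] H) : H →ₗ[ℂ] H) ⊓ LinearMap.range (G : H →ₗ[ℂ] H) :=
          ⟨LinearMap.mem_ker.mpr hSx0, hx2⟩
        rw [hKS'0] at hxk
        simpa using hxk
      have hτbot : ∀ (A R' : H →L[ℂ] H),
          LinearMap.ker (A : H →ₗ[ℂ] H) ⊓ LinearMap.range (R' : H →ₗ[ℂ] H) = ⊥ → tr.τ (kerProjIn A R') = 0 := by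
        intro A R' h
        show tr.τ (projOnto (LinearMap.ker (A : H →ₗ[ℂ] H) ⊓ LinearMap.range (R' : H →ₗ[ℂ] H))) = 0
        have hbot : IsClosed ((⊥ : Submodule ℂ H) : Set H) := by
          rw [Submodule.bot_coe]; exact isClosed_singleton
        rw [h, PQAux.projOnto_eq_zero_of_eq_bot hbot.submodule_topologicalClosure_eq,
          PQAux.tau_zero tr]
      constructor
      · refine ⟨?_, ?_, ⟨0, hzeroN, PQAux.isProjOp_zero, ?_, ?_, ?_⟩⟩
        · rw [hτbot _ _ hKST0]; simp
        · rw [hτbot _ _ hKST'0]; simp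
        · ext x; simp
        · rw [PQAux.tau_zero tr]; simp
        · rw [sub_zero]
          exact hranGST
      · show (tr.τ (kerProjIn (S ∘L T) Q)).toReal
            - (tr.τ (kerProjIn (ContinuousLinearMap.adjoint (S ∘L T)) G)).toReal
          = ((tr.τ (kerProjIn S P)).toReal
              - (tr.τ (kerProjIn (ContinuousLinearMap.adjoint S) G)).toReal)
            + ((tr.τ (kerProjIn T Q)).toReal
              - (tr.τ (kerProjIn (ContinuousLinearMap.adjoint T) P)).toReal)
        rw [hτbot _ _ hKST0, hτbot _ _ hKST'0, hτbot _ _ hKS0, hτbot _ _ hKS'0,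
          hτbot _ _ hKT0, hτbot _ _ hKT'0]
        norm_num
    · -- finite trace of minimal projections: reduce to linear algebra
      haveI fdKT : FiniteDimensional ℂ ↥(LinearMap.ker (T : H →ₗ[ℂ] H) ⊓ LinearMap.range (Q : H →ₗ[ℂ] H)) :=
        PQAux.fd_of_tau_lt_top tr (hclKer T Q hQproj) hτKT
      haveI fdKT' : FiniteDimensional ℂ
          ↥(LinearMap.ker ((ContinuousLinearMap.adjoint T : H →L[ℂ] H) : H →ₗ[ℂ] H) ⊓ LinearMap.range (P : H →ₗ[ℂ] H)) :=
        PQAux.fd_of_tau_lt_top tr (hclKer _ P hPproj) hτKT'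
      haveI fdKS : FiniteDimensional ℂ ↥(LinearMap.ker (S : H →ₗ[ℂ] H) ⊓ LinearMap.range (P : H →ₗ[ℂ] H)) :=
        PQAux.fd_of_tau_lt_top tr (hclKer S P hPproj) hτKS
      haveI fdKS' : FiniteDimensional ℂ
          ↥(LinearMap.ker ((ContinuousLinearMap.adjoint S : H →L[ℂ] H) : H →ₗ[ℂ] H) ⊓ LinearMap.range (G : H →ₗ[ℂ] H)) :=
        PQAux.fd_of_tau_lt_top tr (hclKer _ G hGproj) hτKS'
      haveI fdET : FiniteDimensional ℂ ↥(LinearMap.range (ET : H →ₗ[ℂ] H)) :=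
        PQAux.fd_range_of_proj tr hETproj hτET
      haveI fdES : FiniteDimensional ℂ ↥(LinearMap.range (ES : H →ₗ[ℂ] H)) :=
        PQAux.fd_range_of_proj tr hESproj hτES
      have hranTleP : LinearMap.range (T : H →ₗ[ℂ] H) ≤ LinearMap.range (P : H →ₗ[ℂ] H) := by
        rintro - ⟨x, rfl⟩; exact hranT x
      have hranETleP : LinearMap.range (ET : H →ₗ[ℂ] H) ≤ LinearMap.range (P : H →ₗ[ℂ] H) := by
        rintro - ⟨x, rfl⟩; exact ⟨ET x, hPETpt x⟩
      have hPle : LinearMap.range (P : H →ₗ[ℂ] H) ≤ LinearMap.range (T : H →ₗ[ℂ] H) ⊔ LinearMap.range (ET : H →ₗ[ℂ] H) := by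
        rintro - ⟨x, rfl⟩
        rw [show (P : H →ₗ[ℂ] H) x = P x from rfl, hPdec x]
        exact Submodule.add_mem_sup (hranET ⟨x, rfl⟩) ⟨x, rfl⟩
      have hclranT : IsClosed (LinearMap.range (T : H →ₗ[ℂ] H) : Set H) :=
        PQAux.isClosed_range_of_finite_codim T hclP hranTleP hranETleP hPle
      have hranSleG : LinearMap.range (S : H →ₗ[ℂ] H) ≤ LinearMap.range (G : H →ₗ[ℂ] H) := by
        rintro - ⟨x, rfl⟩; exact hranS x
      have hranESleG : LinearMap.range (ES : H →ₗ[ℂ] H) ≤ LinearMap.range (G : H →ₗ[ℂ] H) := by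
        rintro - ⟨x, rfl⟩; exact ⟨ES x, hGESpt x⟩
      have hGleS : LinearMap.range (G : H →ₗ[ℂ] H) ≤ LinearMap.range (S : H →ₗ[ℂ] H) ⊔ LinearMap.range (ES : H →ₗ[ℂ] H) := by
        rintro - ⟨x, rfl⟩
        rw [show (G : H →ₗ[ℂ] H) x = G x from rfl, hGdec x]
        exact Submodule.add_mem_sup (hranES ⟨x, rfl⟩) ⟨x, rfl⟩
      have hclranS : IsClosed (LinearMap.range (S : H →ₗ[ℂ] H) : Set H) :=
        PQAux.isClosed_range_of_finite_codim S hclG hranSleG hranESleG hGleS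
      have hmapeq : Submodule.map (S : H →ₗ[ℂ] H) (LinearMap.range (ET : H →ₗ[ℂ] H))
          = LinearMap.range ((S : H →ₗ[ℂ] H) ∘ₗ (LinearMap.range (ET : H →ₗ[ℂ] H)).subtype) := by
        rw [LinearMap.range_comp, Submodule.range_subtype]
      haveI fdmapS : FiniteDimensional ℂ
          ↥(Submodule.map (S : H →ₗ[ℂ] H) (LinearMap.range (ET : H →ₗ[ℂ] H))) := by
        rw [hmapeq]; infer_instance
      have hranSTleG : LinearMap.range ((S ∘L T : H →L[ℂ] H) : H →ₗ[ℂ] H) ≤ LinearMap.range (G : H →ₗ[ℂ] H) := by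
        rintro - ⟨x, rfl⟩; exact hranS (T x)
      have hFSTleG : Submodule.map (S : H →ₗ[ℂ] H) (LinearMap.range (ET : H →ₗ[ℂ] H))
          ⊔ LinearMap.range (ES : H →ₗ[ℂ] H) ≤ LinearMap.range (G : H →ₗ[ℂ] H) := by
        apply sup_le
        · rintro - ⟨y, hy, rfl⟩; exact hranS y
        · exact hranESleG
      have hGleST : LinearMap.range (G : H →ₗ[ℂ] H) ≤ LinearMap.range ((S ∘L T : H →L[ℂ] H) : H →ₗ[ℂ] H)
          ⊔ (Submodule.map (S : H →ₗ[ℂ] H) (LinearMap.range (ET : H →ₗ[ℂ] H)) ⊔ LinearMap.range (ES : H →ₗ[ℂ] H)) := by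
        rintro - ⟨x, rfl⟩
        obtain ⟨w, hw⟩ := hranES ⟨x, rfl⟩
        obtain ⟨v, hv⟩ := hranET ⟨w, rfl⟩
        have h2 : S w = S ((P - ET) w) + S (ET w) := by
          conv_lhs => rw [← hSP w, hPdec w, map_add]
        have h3 : S ((P - ET) w) ∈ LinearMap.range ((S ∘L T : H →L[ℂ] H) : H →ₗ[ℂ] H) :=
          ⟨v, by show S (T v) = _; rw [show T v = (P - ET) w from hv]⟩
        have h4 : S (ET w) + ES x
            ∈ Submodule.map (S : H →ₗ[ℂ] H) (LinearMap.range (ET : H →ₗ[ℂ] H)) ⊔ LinearMap.range (ES : H →ₗ[ℂ] H) :=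
          Submodule.add_mem_sup ⟨ET w, ⟨w, rfl⟩, rfl⟩ ⟨x, rfl⟩
        have h5 : G x = S ((P - ET) w) + (S (ET w) + ES x) := by
          rw [hGdec x, ← show S w = (G - ES) x from hw, h2]; abel
        rw [show (G : H →ₗ[ℂ] H) x = G x from rfl, h5]
        exact Submodule.add_mem_sup h3 h4
      have hclranST : IsClosed (LinearMap.range ((S ∘L T : H →L[ℂ] H) : H →ₗ[ℂ] H) : Set H) :=
        PQAux.isClosed_range_of_finite_codim (S ∘L T) hclG hranSTleG hFSTleG hGleST
      -- restrictions
      have hfmem : ∀ x ∈ LinearMap.range (Q : H →ₗ[ℂ] H), T x ∈ LinearMap.range (P : H →ₗ[ℂ] H) := fun x _ => hranT x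
      have hgmem : ∀ x ∈ LinearMap.range (P : H →ₗ[ℂ] H), S x ∈ LinearMap.range (G : H →ₗ[ℂ] H) := fun x _ => hranS x
      have hgfmem : ∀ x ∈ LinearMap.range (Q : H →ₗ[ℂ] H), (S ∘L T) x ∈ LinearMap.range (G : H →ₗ[ℂ] H) :=
        fun x _ => hranS (T x)
      set f := PQAux.restrict2 T (LinearMap.range (Q : H →ₗ[ℂ] H)) (LinearMap.range (P : H →ₗ[ℂ] H)) hfmem with hfdef
      set g := PQAux.restrict2 S (LinearMap.range (P : H →ₗ[ℂ] H)) (LinearMap.range (G : H →ₗ[ℂ] H)) hgmem with hgdef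
      have hgf : g ∘ₗ f
          = PQAux.restrict2 (S ∘L T) (LinearMap.range (Q : H →ₗ[ℂ] H)) (LinearMap.range (G : H →ₗ[ℂ] H)) hgfmem := rfl
      have hADT : ∀ x, T x ∈ Submodule.map (T : H →ₗ[ℂ] H) (LinearMap.range (Q : H →ₗ[ℂ] H)) :=
        fun x => ⟨Q x, ⟨x, rfl⟩, hTQ x⟩
      have hADS : ∀ x, S x ∈ Submodule.map (S : H →ₗ[ℂ] H) (LinearMap.range (P : H →ₗ[ℂ] H)) :=
        fun x => ⟨P x, ⟨x, rfl⟩, hSP x⟩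
      have hADST : ∀ x, (S ∘L T) x
          ∈ Submodule.map ((S ∘L T : H →L[ℂ] H) : H →ₗ[ℂ] H) (LinearMap.range (Q : H →ₗ[ℂ] H)) :=
        fun x => ⟨Q x, ⟨x, rfl⟩, by show S (T (Q x)) = S (T x); rw [hTQ]⟩
      have hmrT : Submodule.map (LinearMap.range (P : H →ₗ[ℂ] H)).subtype (LinearMap.range f)
          = LinearMap.range (T : H →ₗ[ℂ] H) := PQAux.map_range_restrict2 T _ _ hfmem hADT
      have hmrS : Submodule.map (LinearMap.range (G : H →ₗ[ℂ] H)).subtype (LinearMap.range g)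
          = LinearMap.range (S : H →ₗ[ℂ] H) := PQAux.map_range_restrict2 S _ _ hgmem hADS
      have hmrST : Submodule.map (LinearMap.range (G : H →ₗ[ℂ] H)).subtype
            (LinearMap.range (PQAux.restrict2 (S ∘L T) (LinearMap.range (Q : H →ₗ[ℂ] H))
              (LinearMap.range (G : H →ₗ[ℂ] H)) hgfmem))
          = LinearMap.range ((S ∘L T : H →L[ℂ] H) : H →ₗ[ℂ] H) :=
        PQAux.map_range_restrict2 (S ∘L T) _ _ hgfmem hADST
      -- finite dimensional instances for the algebraic lemma
      have fdkerf : FiniteDimensional ℂ (LinearMap.ker f) :=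
        PQAux.fd_ker_restrict2 T _ _ hfmem fdKT
      have fdkerg : FiniteDimensional ℂ (LinearMap.ker g) :=
        PQAux.fd_ker_restrict2 S _ _ hgmem fdKS
      have horthT : (LinearMap.range (T : H →ₗ[ℂ] H))ᗮ = LinearMap.ker ((ContinuousLinearMap.adjoint T : H →L[ℂ] H) : H →ₗ[ℂ] H) :=
        PQAux.orthogonal_range_eq_ker_adjoint T
      have horthS : (LinearMap.range (S : H →ₗ[ℂ] H))ᗮ = LinearMap.ker ((ContinuousLinearMap.adjoint S : H →L[ℂ] H) : H →ₗ[ℂ] H) :=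
        PQAux.orthogonal_range_eq_ker_adjoint S
      have horthST : (LinearMap.range ((S ∘L T : H →L[ℂ] H) : H →ₗ[ℂ] H))ᗮ
          = LinearMap.ker ((ContinuousLinearMap.adjoint (S ∘L T) : H →L[ℂ] H) : H →ₗ[ℂ] H) :=
        PQAux.orthogonal_range_eq_ker_adjoint (S ∘L T)
      have h2T : LinearMap.range (P : H →ₗ[ℂ] H) ⊓ (LinearMap.range (T : H →ₗ[ℂ] H))ᗮ
          = LinearMap.ker ((ContinuousLinearMap.adjoint T : H →L[ℂ] H) : H →ₗ[ℂ] H) ⊓ LinearMap.range (P : H →ₗ[ℂ] H) := by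
        rw [horthT, inf_comm]
      have h2S : LinearMap.range (G : H →ₗ[ℂ] H) ⊓ (LinearMap.range (S : H →ₗ[ℂ] H))ᗮ
          = LinearMap.ker ((ContinuousLinearMap.adjoint S : H →L[ℂ] H) : H →ₗ[ℂ] H) ⊓ LinearMap.range (G : H →ₗ[ℂ] H) := by
        rw [horthS, inf_comm]
      have h2ST : LinearMap.range (G : H →ₗ[ℂ] H) ⊓ (LinearMap.range ((S ∘L T : H →L[ℂ] H) : H →ₗ[ℂ] H))ᗮ
          = LinearMap.ker ((ContinuousLinearMap.adjoint (S ∘L T) : H →L[ℂ] H) : H →ₗ[ℂ] H) ⊓ LinearMap.range (G : H →ₗ[ℂ] H) := by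
        rw [horthST, inf_comm]
      have eT := PQAux.cokerEquiv hclP hclranT hranTleP (LinearMap.range f) hmrT
      have eS := PQAux.cokerEquiv hclG hclranS hranSleG (LinearMap.range g) hmrS
      have fdcokerT : FiniteDimensional ℂ (↥(LinearMap.range (P : H →ₗ[ℂ] H)) ⧸ LinearMap.range f) := by
        haveI : FiniteDimensional ℂ ↥(LinearMap.range (P : H →ₗ[ℂ] H) ⊓ (LinearMap.range (T : H →ₗ[ℂ] H))ᗮ) := by
          rw [h2T]; exact fdKT'
        exact LinearEquiv.finiteDimensional eT.symm
      have fdcokerS : FiniteDimensional ℂ (↥(LinearMap.range (G : H →ₗ[ℂ] H)) ⧸ LinearMap.range g) := by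
        haveI : FiniteDimensional ℂ ↥(LinearMap.range (G : H →ₗ[ℂ] H) ⊓ (LinearMap.range (S : H →ₗ[ℂ] H))ᗮ) := by
          rw [h2S]; exact fdKS'
        exact LinearEquiv.finiteDimensional eS.symm
      have halg := PQAux.alg_index f g fdkerf fdkerg fdcokerT fdcokerS
      have fdkergf := PQAux.alg_fd_ker f g fdkerf fdkerg
      haveI fdKST : FiniteDimensional ℂ ↥(LinearMap.ker ((S ∘L T : H →L[ℂ] H) : H →ₗ[ℂ] H) ⊓ LinearMap.range (Q : H →ₗ[ℂ] H)) := by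
        apply PQAux.fd_inf_of_fd_ker (S ∘L T) _ _ hgfmem
        rw [← hgf]
        exact fdkergf
      have fdcokergf := (PQAux.alg_b2 f g fdcokerT fdcokerS).1
      have eST := PQAux.cokerEquiv hclG hclranST hranSTleG
        (LinearMap.range (PQAux.restrict2 (S ∘L T) (LinearMap.range (Q : H →ₗ[ℂ] H))
          (LinearMap.range (G : H →ₗ[ℂ] H)) hgfmem)) hmrST
      haveI fdinfST : FiniteDimensional ℂ
          ↥(LinearMap.range (G : H →ₗ[ℂ] H) ⊓ (LinearMap.range ((S ∘L T : H →L[ℂ] H) : H →ₗ[ℂ] H))ᗮ) := by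
        haveI : FiniteDimensional ℂ (↥(LinearMap.range (G : H →ₗ[ℂ] H)) ⧸ LinearMap.range
            (PQAux.restrict2 (S ∘L T) (LinearMap.range (Q : H →ₗ[ℂ] H)) (LinearMap.range (G : H →ₗ[ℂ] H)) hgfmem)) := by
          rw [← hgf]
          exact fdcokergf
        exact LinearEquiv.finiteDimensional eST
      haveI fdKST' : FiniteDimensional ℂ
          ↥(LinearMap.ker ((ContinuousLinearMap.adjoint (S ∘L T) : H →L[ℂ] H) : H →ₗ[ℂ] H) ⊓ LinearMap.range (G : H →ₗ[ℂ] H)) := by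
        rw [← h2ST]
        exact fdinfST
      -- numeric translations
      have na1 : Module.finrank ℂ (LinearMap.ker f)
          = Module.finrank ℂ ↥(LinearMap.ker (T : H →ₗ[ℂ] H) ⊓ LinearMap.range (Q : H →ₗ[ℂ] H)) :=
        PQAux.finrank_ker_restrict2 T _ _ hfmem
      have na3 : Module.finrank ℂ (LinearMap.ker g)
          = Module.finrank ℂ ↥(LinearMap.ker (S : H →ₗ[ℂ] H) ⊓ LinearMap.range (P : H →ₗ[ℂ] H)) :=
        PQAux.finrank_ker_restrict2 S _ _ hgmem
      have na2 : Module.finrank ℂ (LinearMap.ker (g ∘ₗ f))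
          = Module.finrank ℂ ↥(LinearMap.ker ((S ∘L T : H →L[ℂ] H) : H →ₗ[ℂ] H) ⊓ LinearMap.range (Q : H →ₗ[ℂ] H)) := by
        rw [hgf]
        exact PQAux.finrank_ker_restrict2 (S ∘L T) _ _ hgfmem
      have nb1 : Module.finrank ℂ (↥(LinearMap.range (P : H →ₗ[ℂ] H)) ⧸ LinearMap.range f)
          = Module.finrank ℂ
            ↥(LinearMap.ker ((ContinuousLinearMap.adjoint T : H →L[ℂ] H) : H →ₗ[ℂ] H) ⊓ LinearMap.range (P : H →ₗ[ℂ] H)) := by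
        rw [LinearEquiv.finrank_eq eT, h2T]
      have nb3 : Module.finrank ℂ (↥(LinearMap.range (G : H →ₗ[ℂ] H)) ⧸ LinearMap.range g)
          = Module.finrank ℂ
            ↥(LinearMap.ker ((ContinuousLinearMap.adjoint S : H →L[ℂ] H) : H →ₗ[ℂ] H) ⊓ LinearMap.range (G : H →ₗ[ℂ] H)) := by
        rw [LinearEquiv.finrank_eq eS, h2S]
      have nb2 : Module.finrank ℂ (↥(LinearMap.range (G : H →ₗ[ℂ] H)) ⧸ LinearMap.range (g ∘ₗ f))
          = Module.finrank ℂ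
            ↥(LinearMap.ker ((ContinuousLinearMap.adjoint (S ∘L T) : H →L[ℂ] H) : H →ₗ[ℂ] H) ⊓ LinearMap.range (G : H →ₗ[ℂ] H)) := by
        rw [hgf, LinearEquiv.finrank_eq eST, h2ST]
      have hnum : Module.finrank ℂ ↥(LinearMap.ker ((S ∘L T : H →L[ℂ] H) : H →ₗ[ℂ] H) ⊓ LinearMap.range (Q : H →ₗ[ℂ] H))
            + Module.finrank ℂ
              ↥(LinearMap.ker ((ContinuousLinearMap.adjoint S : H →L[ℂ] H) : H →ₗ[ℂ] H) ⊓ LinearMap.range (G : H →ₗ[ℂ] H))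
            + Module.finrank ℂ
              ↥(LinearMap.ker ((ContinuousLinearMap.adjoint T : H →L[ℂ] H) : H →ₗ[ℂ] H) ⊓ LinearMap.range (P : H →ₗ[ℂ] H))
          = Module.finrank ℂ ↥(LinearMap.ker (S : H →ₗ[ℂ] H) ⊓ LinearMap.range (P : H →ₗ[ℂ] H))
            + Module.finrank ℂ ↥(LinearMap.ker (T : H →ₗ[ℂ] H) ⊓ LinearMap.range (Q : H →ₗ[ℂ] H))
            + Module.finrank ℂ
              ↥(LinearMap.ker ((ContinuousLinearMap.adjoint (S ∘L T) : H →L[ℂ] H) : H →ₗ[ℂ] H) ⊓ LinearMap.range (G : H →ₗ[ℂ] H)) := by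
        rw [← na2, ← nb3, ← nb1, ← na3, ← na1, ← nb2]
        exact halg
      have hτval : ∀ (M : Submodule ℂ H) (hfd : FiniteDimensional ℂ M),
          tr.τ (projOnto M) = (Module.finrank ℂ M : ℝ≥0∞) * c :=
        fun M hfd => PQAux.tau_projOnto_findim tr he₀ (Module.finrank ℂ M) M hfd rfl
      -- the witness projection
      set PZ := projOnto (LinearMap.range ((S ∘L T : H →L[ℂ] H) : H →ₗ[ℂ] H)) with hPZdef
      have hPZmemN : PZ ∈ N := by
        apply PQAux.projOnto_mem_vonNeumann N hclranST
        intro y hy x hx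
        obtain ⟨v, rfl⟩ := hx
        have hcomm := hy (S ∘L T) (SetLike.mem_coe.mpr hSTmem)
        show y ((S ∘L T) v) ∈ LinearMap.range ((S ∘L T : H →L[ℂ] H) : H →ₗ[ℂ] H)
        rw [← ContinuousLinearMap.mul_apply, ← hcomm, ContinuousLinearMap.mul_apply]
        exact ⟨y v, rfl⟩
      have hGPZ : G ∘L PZ = PZ := by
        ext x
        show G (PZ x) = PZ x
        apply PQAux.projOp_apply_of_mem_range hGproj
        apply hranSTleG
        have := PQAux.projOnto_mem (LinearMap.range ((S ∘L T : H →L[ℂ] H) : H →ₗ[ℂ] H)) x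
        rwa [hclranST.submodule_topologicalClosure_eq] at this
      have hPZG : PZ ∘L G = PZ := by
        have h9 := congrArg ContinuousLinearMap.adjoint hGPZ
        rwa [ContinuousLinearMap.adjoint_comp, (PQAux.projOnto_selfAdjoint _).adjoint_eq,
          hGproj.1.adjoint_eq] at h9
      have hE'proj : IsProjOp (G - PZ) :=
        PQAux.isProjOp_sub (PQAux.isProjOp_projOnto _) hGproj hGPZ hPZG
      have hranE' : LinearMap.range ((G - PZ : H →L[ℂ] H) : H →ₗ[ℂ] H)
          = LinearMap.range (G : H →ₗ[ℂ] H) ⊓ (LinearMap.range ((S ∘L T : H →L[ℂ] H) : H →ₗ[ℂ] H))ᗮ := by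
        apply le_antisymm
        · rintro - ⟨v, rfl⟩
          have hPZv : PZ v ∈ LinearMap.range ((S ∘L T : H →L[ℂ] H) : H →ₗ[ℂ] H) := by
            have := PQAux.projOnto_mem (LinearMap.range ((S ∘L T : H →L[ℂ] H) : H →ₗ[ℂ] H)) v
            rwa [hclranST.submodule_topologicalClosure_eq] at this
          constructor
          · show (G - PZ) v ∈ LinearMap.range (G : H →ₗ[ℂ] H)
            have h6 : (G - PZ) v = G v - PZ v := rfl
            rw [h6]
            exact sub_mem ⟨v, rfl⟩ (hranSTleG hPZv)
          · intro z hz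
            have hGz : G z = z := PQAux.projOp_apply_of_mem_range hGproj (hranSTleG hz)
            have hPZz : PZ z = z := PQAux.projOnto_apply_of_mem' hclranST hz
            have e1 : (inner ℂ z ((G - PZ) v) : ℂ) = inner ℂ z (G v) - inner ℂ z (PZ v) := by
              show (inner ℂ z (G v - PZ v) : ℂ) = _
              rw [inner_sub_right]
            have e2 : (inner ℂ z (G v) : ℂ) = inner ℂ z v := by
              rw [← ContinuousLinearMap.adjoint_inner_left, hGproj.1.adjoint_eq, hGz]
            have e3 : (inner ℂ z (PZ v) : ℂ) = inner ℂ z v := by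
              rw [← ContinuousLinearMap.adjoint_inner_left,
                (PQAux.projOnto_selfAdjoint _).adjoint_eq, hPZz]
            rw [show ((G - PZ : H →L[ℂ] H) : H →ₗ[ℂ] H) v = (G - PZ) v from rfl, e1, e2, e3,
              sub_self]
        · rintro x ⟨hx1, hx2⟩
          refine ⟨x, ?_⟩
          have hGx : G x = x := PQAux.projOp_apply_of_mem_range hGproj hx1
          have hPZx : PZ x = 0 := PQAux.projOnto_apply_of_mem_orthogonal
            (by rwa [hclranST.submodule_topologicalClosure_eq])
          show G x - PZ x = x
          rw [hGx, hPZx, sub_zero]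
      haveI fdranE' : FiniteDimensional ℂ ↥(LinearMap.range ((G - PZ : H →L[ℂ] H) : H →ₗ[ℂ] H)) := by
        rw [hranE']
        exact fdinfST
      refine ⟨⟨?_, ?_, ⟨G - PZ, sub_mem hG hPZmemN, hE'proj, ?_, ?_, ?_⟩⟩, ?_⟩
      · show tr.τ (projOnto (LinearMap.ker ((S ∘L T : H →L[ℂ] H) : H →ₗ[ℂ] H) ⊓ LinearMap.range (Q : H →ₗ[ℂ] H))) < ⊤
        rw [hτval _ fdKST]
        exact ENNReal.mul_lt_top (ENNReal.natCast_lt_top _) (lt_top_iff_ne_top.mpr hctop)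
      · show tr.τ (projOnto (LinearMap.ker ((ContinuousLinearMap.adjoint (S ∘L T) : H →L[ℂ] H) : H →ₗ[ℂ] H)
            ⊓ LinearMap.range (G : H →ₗ[ℂ] H))) < ⊤
        rw [hτval _ fdKST']
        exact ENNReal.mul_lt_top (ENNReal.natCast_lt_top _) (lt_top_iff_ne_top.mpr hctop)
      · show G ∘L (G - PZ) = G - PZ
        rw [ContinuousLinearMap.comp_sub, hG2, hGPZ]
      · show tr.τ (G - PZ) < ⊤
        rw [PQAux.projOp_eq_projOnto_range hE'proj, hτval _ fdranE']
        exact ENNReal.mul_lt_top (ENNReal.natCast_lt_top _) (lt_top_iff_ne_top.mpr hctop)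
      · show LinearMap.range ((G - (G - PZ) : H →L[ℂ] H) : H →ₗ[ℂ] H) ≤ LinearMap.range ((S ∘L T : H →L[ℂ] H) : H →ₗ[ℂ] H)
        have h7 : G - (G - PZ) = PZ := by abel
        rw [h7, hPZdef, PQAux.range_projOnto, hclranST.submodule_topologicalClosure_eq]
      · -- the index identity
        have v1 : tr.τ (kerProjIn (S ∘L T) Q)
            = (Module.finrank ℂ ↥(LinearMap.ker ((S ∘L T : H →L[ℂ] H) : H →ₗ[ℂ] H) ⊓ LinearMap.range (Q : H →ₗ[ℂ] H)) : ℝ≥0∞) * c :=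
          hτval _ fdKST
        have v2 : tr.τ (kerProjIn (ContinuousLinearMap.adjoint (S ∘L T)) G)
            = (Module.finrank ℂ ↥(LinearMap.ker ((ContinuousLinearMap.adjoint (S ∘L T) : H →L[ℂ] H) : H →ₗ[ℂ] H)
                ⊓ LinearMap.range (G : H →ₗ[ℂ] H)) : ℝ≥0∞) * c :=
          hτval _ fdKST'
        have v3 : tr.τ (kerProjIn S P)
            = (Module.finrank ℂ ↥(LinearMap.ker (S : H →ₗ[ℂ] H) ⊓ LinearMap.range (P : H →ₗ[ℂ] H)) : ℝ≥0∞) * c :=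
          hτval _ fdKS
        have v4 : tr.τ (kerProjIn (ContinuousLinearMap.adjoint S) G)
            = (Module.finrank ℂ ↥(LinearMap.ker ((ContinuousLinearMap.adjoint S : H →L[ℂ] H) : H →ₗ[ℂ] H)
                ⊓ LinearMap.range (G : H →ₗ[ℂ] H)) : ℝ≥0∞) * c :=
          hτval _ fdKS'
        have v5 : tr.τ (kerProjIn T Q)
            = (Module.finrank ℂ ↥(LinearMap.ker (T : H →ₗ[ℂ] H) ⊓ LinearMap.range (Q : H →ₗ[ℂ] H)) : ℝ≥0∞) * c :=
          hτval _ fdKT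
        have v6 : tr.τ (kerProjIn (ContinuousLinearMap.adjoint T) P)
            = (Module.finrank ℂ ↥(LinearMap.ker ((ContinuousLinearMap.adjoint T : H →L[ℂ] H) : H →ₗ[ℂ] H)
                ⊓ LinearMap.range (P : H →ₗ[ℂ] H)) : ℝ≥0∞) * c :=
          hτval _ fdKT'
        show (tr.τ (kerProjIn (S ∘L T) Q)).toReal
            - (tr.τ (kerProjIn (ContinuousLinearMap.adjoint (S ∘L T)) G)).toReal
          = ((tr.τ (kerProjIn S P)).toReal
              - (tr.τ (kerProjIn (ContinuousLinearMap.adjoint S) G)).toReal)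
            + ((tr.τ (kerProjIn T Q)).toReal
              - (tr.τ (kerProjIn (ContinuousLinearMap.adjoint T) P)).toReal)
        rw [v1, v2, v3, v4, v5, v6]
        simp only [ENNReal.toReal_mul, ENNReal.toReal_natCast]
        have hnumR : (Module.finrank ℂ ↥(LinearMap.ker ((S ∘L T : H →L[ℂ] H) : H →ₗ[ℂ] H) ⊓ LinearMap.range (Q : H →ₗ[ℂ] H)) : ℝ)
              + Module.finrank ℂ
                ↥(LinearMap.ker ((ContinuousLinearMap.adjoint S : H →L[ℂ] H) : H →ₗ[ℂ] H) ⊓ LinearMap.range (G : H →ₗ[ℂ] H))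
              + Module.finrank ℂ
                ↥(LinearMap.ker ((ContinuousLinearMap.adjoint T : H →L[ℂ] H) : H →ₗ[ℂ] H) ⊓ LinearMap.range (P : H →ₗ[ℂ] H))
            = Module.finrank ℂ ↥(LinearMap.ker (S : H →ₗ[ℂ] H) ⊓ LinearMap.range (P : H →ₗ[ℂ] H))
              + Module.finrank ℂ ↥(LinearMap.ker (T : H →ₗ[ℂ] H) ⊓ LinearMap.range (Q : H →ₗ[ℂ] H))
              + Module.finrank ℂ ↥(LinearMap.ker ((ContinuousLinearMap.adjoint (S ∘L T) : H →L[ℂ] H) : H →ₗ[ℂ] H)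
                  ⊓ LinearMap.range (G : H →ₗ[ℂ] H)) := by
          exact_mod_cast hnum
        linear_combination c.toReal * hnumR

end
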